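/- arXiv:math/0601386 — 2 statements merged into one kernel-verified Lean document; each statement's English description precedes it below -/
import Mathlib

section
/- Fix 1 ≤ k ≤ n and a sign γ, set σ = u_{k−1}⊗∂^γu_1⊗u_{n−k}, and let A_q^β ∈ νI^n (1 ≤ q ≤ n−1) be the elements defined from D as in the text. Then there are elements A_q ∈ νI^n for 0 ≤ q ≤ n−1 given inductively by A_0 = ⟨σ⟩ and A_q = A_q^− #_{q−1} A_{q−1} #_{q−1} A_q^+ for 1 ≤ q ≤ n−1 (in particular d_{q−1}⁺A_q^− = d_{q−1}⁻A_{q−1} and d_{q−1}⁺A_{q−1} = d_{q−1}⁻A_q^+, so the composites exist), and these satisfy (A_q)_i^α = ⟨u_n⟩_i^α for i < q, (A_q)_q^α = (id − ∂D)⟨u_n⟩_q^α, and (A_q)_i^α = ⟨σ⟩_i^α for i > q. -/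
namespace CubicalNerve

/-- Signs: `true` is `+`, `false` is `−`, as an integer `±1`. -/
def sgn (α : Bool) : ℤ := if α then 1 else -1

/-- Sign twisting: `twist α m` is the sign `(−1)^m α`. -/
def twist (α : Bool) (m : ℕ) : Bool := if Even m then α else !α

/-- A standard basis element of the chain complex `Iⁿ`: the factor at position `i` is
`u₁` when the value is `none`, and `∂^α u₁` when the value is `some α`. -/
abbrev Cell (n : ℕ) := Fin n → Option Bool

/-- The dimension of a standard basis element: the number of `u₁` factors. -/
def Cell.dim {n : ℕ} (σ : Cell n) : ℕ := (Finset.univ.filter fun i => σ i = none).card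

/-- The number of `u₁` factors strictly before position `i`. -/
def Cell.below {n : ℕ} (σ : Cell n) (i : Fin n) : ℕ :=
  (Finset.univ.filter fun j => j < i ∧ σ j = none).card

/-- The number of `∂^± u₁` factors at positions `≤ j`. -/
def Cell.sLe {n : ℕ} (σ : Cell n) (j : Fin n) : ℕ :=
  (Finset.univ.filter fun i => i ≤ j ∧ σ i ≠ none).card

/-- The chain groups of `Iⁿ` (all degrees taken together): the free abelian group
on the standard basis elements. -/
abbrev Chain (n : ℕ) := Cell n →₀ ℤ

/-- The boundary of a standard basis element (tensor-product boundary formula). -/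
noncomputable def bdCell {n : ℕ} (σ : Cell n) : Chain n :=
  ∑ i ∈ Finset.univ.filter (fun i => σ i = none),
    ((-1 : ℤ) ^ σ.below i) •
      (Finsupp.single (Function.update σ i (some true)) 1 -
        Finsupp.single (Function.update σ i (some false)) 1)

/-- The boundary operator of `Iⁿ`. -/
noncomputable def bd {n : ℕ} (c : Chain n) : Chain n := c.sum fun σ z => z • bdCell σ

/-- The positive part of a chain. -/
noncomputable def posPart {n : ℕ} (c : Chain n) : Chain n :=
  Finsupp.mapRange (fun z => max z 0) (by simp) c

/-- The negative part of a chain. -/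
noncomputable def negPart {n : ℕ} (c : Chain n) : Chain n :=
  Finsupp.mapRange (fun z => max (-z) 0) (by simp) c

/-- `∂^α`: the positive (resp. negative) part of the boundary. -/
noncomputable def bdp {n : ℕ} (α : Bool) (c : Chain n) : Chain n :=
  if α then posPart (bd c) else negPart (bd c)

/-- The atom `⟨σ⟩`: `atom σ α q` is the chain `⟨σ⟩_q^α = (∂^α)^{p−q} σ` for `q ≤ p = dim σ`,
and `0` for `q > p`. -/
noncomputable def atom {n : ℕ} (σ : Cell n) (α : Bool) (q : ℕ) : Chain n :=
  if q ≤ σ.dim then (bdp α)^[σ.dim - q] (Finsupp.single σ 1) else 0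

/-- The augmentation (extended by zero on positive-degree chains). -/
noncomputable def aug {n : ℕ} (c : Chain n) : ℤ := c.sum fun σ z => if σ.dim = 0 then z else 0

/-- The top basis element `u_n = u₁ ⊗ ⋯ ⊗ u₁` of `Iⁿ`. -/
def un (n : ℕ) : Cell n := fun _ => none

/-- The basis element `u_{k-1} ⊗ ∂^γ u₁ ⊗ u_{n-k}` (here `k : Fin n` is `k−1` in the
1-indexed notation of the paper). -/
def kcell {n : ℕ} (k : Fin n) (γ : Bool) : Cell n := Function.update (un n) k (some γ)

/-- Membership in `ν Iⁿ` for a double sequence `x`, where `x i α` is `x_i^α`: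
each `x_i^α` is an `i`-chain which is a nonnegative sum of standard basis elements,
`ε x_0^- = ε x_0^+ = 1`, and `x_i^+ − x_i^− = ∂ x_{i+1}^- = ∂ x_{i+1}^+`. -/
def IsNu {n : ℕ} (x : ℕ → Bool → Chain n) : Prop :=
  (∀ i α, ∀ σ ∈ (x i α).support, Cell.dim σ = i) ∧
  (∀ i α, 0 ≤ x i α) ∧
  (∀ α, aug (x 0 α) = 1) ∧
  (∀ i α, x i true - x i false = bd (x (i + 1) α))

/-- The double sequence of an atom. -/
noncomputable def atomSeq {n : ℕ} (σ : Cell n) : ℕ → Bool → Chain n := fun i α => atom σ α i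

/-- The identity operation `d_p^α` on double sequences. -/
noncomputable def dOp {n : ℕ} (p : ℕ) (α : Bool) (x : ℕ → Bool → Chain n) : ℕ → Bool → Chain n :=
  fun i β => if i < p then x i β else if i = p then x p α else 0

/-- The composition `x #_p y = x − d_p⁺ x + y`, formed termwise. -/
noncomputable def comp {n : ℕ} (p : ℕ) (x y : ℕ → Bool → Chain n) : ℕ → Bool → Chain n :=
  fun i β => x i β - dOp p true x i β + y i β

/-- Insertion of a new tensor factor at (0-indexed) position `i` (clamped into range). -/
def insertCell {m : ℕ} (i : ℕ) (v : Option Bool) (σ : Cell m) : Cell (m + 1) :=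
  Fin.insertNth ⟨min i m, Nat.lt_succ_of_le (min_le_right i m)⟩ v σ

/-- The face chain map `∂̌_i^α : Iᵐ → Iᵐ⁺¹` (with `i` 1-indexed, `1 ≤ i ≤ m+1`),
given on standard basis elements by `x ⊗ y ↦ x ⊗ ∂^α u₁ ⊗ y`. -/
noncomputable def faceL (m : ℕ) (i : ℕ) (α : Bool) : Chain m →ₗ[ℤ] Chain (m + 1) :=
  Finsupp.lmapDomain ℤ ℤ (insertCell (i - 1) (some α))

/-- `IsFaceComposite F` means that `F` is a composite of face chain maps `∂̌_i^α`. -/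
inductive IsFaceComposite : ∀ {m n : ℕ}, (Chain m →ₗ[ℤ] Chain n) → Prop
  | id (m : ℕ) : IsFaceComposite (LinearMap.id : Chain m →ₗ[ℤ] Chain m)
  | step {m d : ℕ} {F : Chain m →ₗ[ℤ] Chain d} (i : ℕ) (α : Bool)
      (h1 : 1 ≤ i) (h2 : i ≤ d + 1) :
      IsFaceComposite F → IsFaceComposite ((faceL d i α).comp F)

/-- `stdC m p ι a` is the composite `∂̌_{ι 0}^{a 0} ∘ ⋯ ∘ ∂̌_{ι (p-1)}^{a (p-1)} : Iᵐ → Iᵐ⁺ᵖ`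
(so `∂̌_{ι (p-1)}^{a (p-1)}` is applied first). -/
noncomputable def stdC (m : ℕ) :
    (p : ℕ) → (Fin p → ℕ) → (Fin p → Bool) → (Chain m →ₗ[ℤ] Chain (m + p))
  | 0, _, _ => LinearMap.id
  | p + 1, ι, a =>
      (faceL (m + p) (ι 0) (a 0)).comp (stdC m p (fun r => ι r.succ) (fun r => a r.succ))

/-- Transport of chains along an equality of dimensions. -/
noncomputable def chainCongr {a b : ℕ} (h : a = b) : Chain a ≃ₗ[ℤ] Chain b :=
  Finsupp.domLCongr (Equiv.arrowCongr (finCongr h) (Equiv.refl (Option Bool)))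

/-- The basis element of `I¹` with value `v`. -/
def cellOf (v : Option Bool) : Cell 1 := fun _ => v

/-- The `n`-fold tensor product of chains of `I¹`, as a chain of `Iⁿ`. -/
noncomputable def tens {n : ℕ} (c : Fin n → Chain 1) : Chain n :=
  Finsupp.equivFunOnFinite.symm fun σ => ∏ j, (c j) (cellOf (σ j))

/-- `τ` has an "extreme" standard decomposition of constant sign `ε`: for its `r`-th
factor `∂_{i}^{α}` (`r`, `i` 1-indexed), `(−1)^{i−r} α = ε`. -/
def ExtremeSign {n : ℕ} (τ : Cell n) (ε : ℤ) : Prop :=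
  ∀ (j : Fin n) (α : Bool), τ j = some α →
    (-1 : ℤ) ^ ((j : ℕ) + 1 + τ.sLe j) * sgn α = ε

/-- The basis element `τ` corresponds to a precubical operation complementary to
`∂_{k+1}^γ` (with `k : Fin n`, i.e. `k+1` in the paper's 1-indexing): its standard
decomposition has no factor at position `k`, and inserting `∂_{k+1}^{−γ}` produces
a standard decomposition of constant sign. -/
def CellCompl {n : ℕ} (k : Fin n) (γ : Bool) (τ : Cell n) : Prop :=
  τ k = none ∧ ∃ ε : ℤ, ExtremeSign (Function.update τ k (some (!γ))) ε

/-- The chain homotopy `D` associated to the face `∂_{k+1}^γ` (0-indexed `k : Fin n`). -/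
noncomputable def Dfun {n : ℕ} (k : Fin n) (γ : Bool) (c : Chain n) : Chain n :=
  c.sum fun τ z =>
    if τ k = some (!γ) then
      (z * (-((-1 : ℤ) ^ Cell.below τ k * sgn γ))) •
        Finsupp.single (Function.update τ k (none : Option Bool)) 1
    else 0

/-- The double sequence `A_q^β` of Proposition 6.4. -/
noncomputable def Aseq {n : ℕ} (k : Fin n) (γ : Bool) (q : ℕ) (β : Bool) :
    ℕ → Bool → Chain n :=
  fun i α =>
    if i + 1 < q then atom (un n) α i
    else if i + 1 = q then
      (if α = β then atom (un n) β i
       else atom (un n) β i - bd (Dfun k γ (atom (un n) β i)))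
    else if i = q then sgn β • Dfun k γ (atom (un n) β (q - 1))
    else 0

/-- The elements `A_q` of Proposition 6.5, defined inductively from the `A_q^β` by
`A_0 = ⟨σ⟩` and `A_q = A_q^− #_{q−1} A_{q−1} #_{q−1} A_q^+`. -/
noncomputable def Aq {n : ℕ} (k : Fin n) (γ : Bool) : ℕ → (ℕ → Bool → Chain n)
  | 0 => atomSeq (kcell k γ)
  | q + 1 => comp q (comp q (Aseq k γ (q + 1) false) (Aq k γ q)) (Aseq k γ (q + 1) true)


section Infrastructure

open Finset

variable {n : ℕ}

lemma sgn_mul_self (α : Bool) : sgn α * sgn α = 1 := by cases α <;> simp [sgn]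

/-- `ρ` is a face of `σ`. -/
def Le {n : ℕ} (ρ σ : Cell n) : Prop := ∀ j, σ j ≠ none → ρ j = σ j

def rle {n : ℕ} (σ ρ : Cell n) (j : Fin n) : ℕ :=
  (Finset.univ.filter fun j' => j' ≤ j ∧ σ j' = none ∧ ρ j' ≠ none).card

def Emem {n : ℕ} (σ : Cell n) (α : Bool) (q : ℕ) (ρ : Cell n) : Prop :=
  Le ρ σ ∧ ρ.dim = q ∧
    ∀ j d, σ j = none → ρ j = some d →
      (-1 : ℤ) ^ (σ.below j + 1 + rle σ ρ j) * sgn d = sgn α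

open Classical in
noncomputable def X {n : ℕ} (σ : Cell n) (α : Bool) (q : ℕ) : Chain n :=
  Finsupp.equivFunOnFinite.symm fun ρ => if Emem σ α q ρ then 1 else 0

open Classical in
lemma X_apply (σ : Cell n) (α : Bool) (q : ℕ) (ρ : Cell n) :
    X σ α q ρ = if Emem σ α q ρ then 1 else 0 := rfl

def sval : Option Bool → ℤ
  | some d => sgn d
  | none => 0

noncomputable def bco {n : ℕ} (ρ : Cell n) (i : Fin n) : ℤ :=
  (-1) ^ (Cell.below ρ i) * sval (ρ i)

lemma below_update (ρ : Cell n) (i : Fin n) (v : Option Bool) :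
    Cell.below (Function.update ρ i v) i = Cell.below ρ i := by
  unfold Cell.below
  congr 1
  apply Finset.filter_congr
  intro j _
  by_cases h : j < i
  · simp [Function.update_of_ne (ne_of_lt h), h]
  · simp [h]

lemma update_eq_iff_gen {τ ρ : Cell n} {i : Fin n} {u v : Option Bool} (hτ : τ i = u) :
    Function.update τ i v = ρ ↔ (τ = Function.update ρ i u ∧ ρ i = v) := by
  constructor
  · rintro rfl
    refine ⟨?_, by simp⟩
    funext j
    by_cases hj : j = i
    · subst hj; simp [hτ]
    · simp [Function.update_of_ne hj]
  · rintro ⟨rfl, hv⟩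
    rw [Function.update_idem]
    rw [← hv]
    exact Function.update_eq_self _ _

lemma dim_update_none {ρ : Cell n} {i : Fin n} {d : Bool} (h : ρ i = some d) :
    Cell.dim (Function.update ρ i none) = Cell.dim ρ + 1 := by
  unfold Cell.dim
  have hs : (univ.filter fun j => Function.update ρ i none j = none)
      = insert i (univ.filter fun j => ρ j = none) := by
    ext j
    by_cases hj : j = i
    · subst hj; simp
    · simp [Function.update_of_ne hj, hj]
  rw [hs, Finset.card_insert_of_notMem (by simp [h])]

lemma dim_update_some {ρ : Cell n} {i : Fin n} (d : Bool) (h : ρ i = none) :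
    Cell.dim (Function.update ρ i (some d)) + 1 = Cell.dim ρ := by
  unfold Cell.dim
  have hs : (univ.filter fun j => Function.update ρ i (some d) j = none)
      = (univ.filter fun j => ρ j = none).erase i := by
    ext j
    by_cases hj : j = i
    · subst hj; simp
    · simp [Function.update_of_ne hj, hj]
  have hmem : i ∈ univ.filter fun j => ρ j = none := by simp [h]
  rw [hs, Finset.card_erase_of_mem hmem]
  have := Finset.card_pos.2 ⟨i, hmem⟩
  omega

lemma bdCell_apply (τ ρ : Cell n) :
    bdCell τ ρ = ∑ i : Fin n, (if τ i = none then
      (-1:ℤ) ^ (τ.below i) *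
        ((if Function.update τ i (some true) = ρ then 1 else 0) -
         (if Function.update τ i (some false) = ρ then 1 else 0)) else 0) := by
  unfold bdCell
  rw [Finset.sum_apply', ← Finset.sum_filter]
  refine Finset.sum_congr rfl fun i _ => ?_
  simp [Finsupp.single_apply, mul_sub]

lemma bd_apply (c : Chain n) (ρ : Cell n) :
    bd c ρ = ∑ i : Fin n, bco ρ i * c (Function.update ρ i none) := by
  classical
  unfold bd
  rw [Finsupp.sum_apply, Finsupp.sum_fintype]
  swap
  · intro τ; simp
  simp only [Finsupp.smul_apply, smul_eq_mul]
  have : ∀ τ : Cell n, c τ * bdCell τ ρ = ∑ i : Fin n, c τ * (if τ i = none then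
      (-1:ℤ) ^ (τ.below i) *
        ((if Function.update τ i (some true) = ρ then 1 else 0) -
         (if Function.update τ i (some false) = ρ then 1 else 0)) else 0) := by
    intro τ; rw [bdCell_apply, Finset.mul_sum]
  rw [Finset.sum_congr rfl fun τ _ => this τ, Finset.sum_comm]
  refine Finset.sum_congr rfl fun i _ => ?_
  rw [Finset.sum_eq_single (Function.update ρ i none)]
  · have hτ : Function.update ρ i none i = none := by simp
    rcases h : ρ i with _ | d
    · -- ρ i = none : both indicators are 0
      have h1 : ∀ b : Bool, (if Function.update (Function.update ρ i none) i (some b) = ρ then (1:ℤ) else 0) = 0 := by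
        intro b
        apply if_neg
        intro hc
        have hv := ((update_eq_iff_gen hτ).1 hc).2
        rw [h] at hv; exact nomatch hv
      rw [if_pos hτ, h1, h1]
      simp [bco, sval, h]
    · have h1 : ∀ b : Bool, (if Function.update (Function.update ρ i none) i (some b) = ρ then (1:ℤ) else 0) = (if d = b then 1 else 0) := by
        intro b
        by_cases hdb : d = b
        · subst hdb
          rw [if_pos ((update_eq_iff_gen hτ).2 ⟨rfl, h⟩), if_pos rfl]
        · rw [if_neg, if_neg hdb]
          intro hc
          have hv := ((update_eq_iff_gen hτ).1 hc).2
          rw [h] at hv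
          exact hdb (Option.some_injective _ hv)
      rw [if_pos hτ, h1, h1, below_update]
      have : ((if d = true then (1:ℤ) else 0) - (if d = false then 1 else 0)) = sgn d := by
        cases d <;> simp [sgn]
      rw [this, bco, h]
      show c _ * ((-1:ℤ)^ _ * sgn d) = (-1:ℤ)^ _ * sval (some d) * c _
      simp [sval]; ring
  · intro τ _ hne
    rcases hτi : τ i with _ | b
    · have h1 : ∀ b : Bool, (if Function.update τ i (some b) = ρ then (1:ℤ) else 0) = 0 := by
        intro b
        apply if_neg
        intro hc
        exact hne ((update_eq_iff_gen hτi).1 hc).1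
      simp [h1]
    · simp
  · intro h; exact absurd (Finset.mem_univ _) h

lemma Dfun_apply (k : Fin n) (γ : Bool) (c : Chain n) (ρ : Cell n) :
    Dfun k γ c ρ = if ρ k = none then
      (-((-1:ℤ) ^ (Cell.below ρ k) * sgn γ)) * c (Function.update ρ k (some (!γ))) else 0 := by
  classical
  unfold Dfun
  rw [Finsupp.sum_apply, Finsupp.sum_fintype]
  swap
  · intro τ; simp
  have hterm : ∀ τ : Cell n, (if τ k = some (!γ) then
        ((c τ * (-((-1:ℤ) ^ Cell.below τ k * sgn γ))) •
          Finsupp.single (Function.update τ k (none : Option Bool)) 1 : Chain n)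
      else 0) ρ = (if τ k = some (!γ) then
        (c τ * (-((-1:ℤ) ^ Cell.below τ k * sgn γ))) *
          (if Function.update τ k (none : Option Bool) = ρ then 1 else 0) else 0) := by
    intro τ
    split
    · rw [Finsupp.smul_apply, Finsupp.single_apply, smul_eq_mul]
    · rfl
  rw [Finset.sum_congr rfl fun τ _ => hterm τ]
  rw [Finset.sum_eq_single (Function.update ρ k (some (!γ)))]
  · have hτk : Function.update ρ k (some (!γ)) k = some (!γ) := by simp
    rw [if_pos hτk]
    rcases h : ρ k with _ | d
    · have hc : Function.update (Function.update ρ k (some (!γ))) k none = ρ :=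
        (update_eq_iff_gen hτk).2 ⟨rfl, h⟩
      rw [if_pos hc, if_pos rfl, below_update]
      ring
    · rw [if_neg (fun hc => by
        have hv := ((update_eq_iff_gen hτk).1 hc).2
        rw [h] at hv; exact nomatch hv), mul_zero]
      rw [if_neg (by simp)]
  · intro τ _ hne
    split
    · rename_i hτk
      rw [if_neg, mul_zero]
      intro hc
      exact hne ((update_eq_iff_gen hτk).1 hc).1
    · rfl
  · intro h; exact absurd (Finset.mem_univ _) h

end Infrastructure

section Homotopy

open Finset

variable {n : ℕ}

lemma chain_ext {c d : Chain n} (h : ∀ ρ, c ρ = d ρ) : c = d := Finsupp.ext h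

lemma sgn_not (γ : Bool) : sgn (!γ) = - sgn γ := by cases γ <;> simp [sgn]

lemma neg_one_pow_mul_self (m : ℕ) : ((-1:ℤ)^m) * ((-1:ℤ)^m) = 1 := by
  rw [← pow_add]
  exact Even.neg_one_pow ⟨m, rfl⟩

lemma bd_sub (a b : Chain n) : bd (a - b) = bd a - bd b := by
  apply chain_ext; intro ρ
  simp [bd_apply, Finsupp.sub_apply, mul_sub, Finset.sum_sub_distrib]

lemma bd_add (a b : Chain n) : bd (a + b) = bd a + bd b := by
  apply chain_ext; intro ρ
  simp [bd_apply, Finsupp.add_apply, mul_add, Finset.sum_add_distrib]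

lemma bd_zero : bd (0 : Chain n) = 0 := by
  apply chain_ext; intro ρ
  simp [bd_apply]

lemma bd_smul (z : ℤ) (a : Chain n) : bd (z • a) = z • bd a := by
  apply chain_ext; intro ρ
  simp [bd_apply, Finsupp.smul_apply, Finset.mul_sum]
  refine Finset.sum_congr rfl fun i _ => by ring

lemma Dfun_sub (k : Fin n) (γ : Bool) (a b : Chain n) :
    Dfun k γ (a - b) = Dfun k γ a - Dfun k γ b := by
  apply chain_ext; intro ρ
  simp only [Dfun_apply, Finsupp.sub_apply]
  split
  · ring
  · ring

lemma Dfun_add (k : Fin n) (γ : Bool) (a b : Chain n) :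
    Dfun k γ (a + b) = Dfun k γ a + Dfun k γ b := by
  apply chain_ext; intro ρ
  simp only [Dfun_apply, Finsupp.add_apply]
  split
  · ring
  · ring

lemma Dfun_zero (k : Fin n) (γ : Bool) : Dfun k γ (0 : Chain n) = 0 := by
  apply chain_ext; intro ρ
  simp [Dfun_apply]

noncomputable def phiC {n : ℕ} (k : Fin n) (γ : Bool) (c : Chain n) : Chain n :=
  Finsupp.equivFunOnFinite.symm fun ρ =>
    if ρ k = some γ then c ρ + c (Function.update ρ k (some (!γ))) else 0

lemma phiC_apply (k : Fin n) (γ : Bool) (c : Chain n) (ρ : Cell n) :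
    phiC k γ c ρ =
      if ρ k = some γ then c ρ + c (Function.update ρ k (some (!γ))) else 0 := rfl

lemma below_update_none_of_some {ρ : Cell n} {i j : Fin n} (hij : i ≠ j) {d : Bool}
    (h : ρ i = some d) :
    Cell.below (Function.update ρ i none) j = Cell.below ρ j + (if i < j then 1 else 0) := by
  unfold Cell.below
  by_cases hij2 : i < j
  · rw [if_pos hij2]
    have hs : (univ.filter fun j' => j' < j ∧ Function.update ρ i none j' = none)
        = insert i (univ.filter fun j' => j' < j ∧ ρ j' = none) := by
      ext j'
      by_cases hj' : j' = i
      · subst hj'; simp [hij2]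
      · simp [Function.update_of_ne hj', hj']
    rw [hs, Finset.card_insert_of_notMem (by simp [h])]
  · rw [if_neg hij2, add_zero]
    congr 1
    apply Finset.filter_congr
    intro j' _
    by_cases hj' : j' = i
    · subst hj'
      simp only [Function.update_self]
      constructor
      · rintro ⟨hlt, -⟩; exact absurd hlt hij2
      · rintro ⟨hlt, hn⟩; exact absurd hlt hij2
    · simp [Function.update_of_ne hj']

lemma below_update_some_of_none {ρ : Cell n} {i j : Fin n} (hij : i ≠ j) (d : Bool)
    (h : ρ i = none) :
    Cell.below (Function.update ρ i (some d)) j + (if i < j then 1 else 0) = Cell.below ρ j := by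
  have h2 := below_update_none_of_some (ρ := Function.update ρ i (some d)) hij
    (d := d) (by simp)
  rw [Function.update_idem] at h2
  rw [← h, Function.update_eq_self] at h2
  exact h2.symm

lemma below_congr {ρ ρ' : Cell n} (h : ∀ j, ρ j = none ↔ ρ' j = none) (j : Fin n) :
    Cell.below ρ j = Cell.below ρ' j := by
  unfold Cell.below
  congr 1
  apply Finset.filter_congr
  intro j' _
  rw [h j']

lemma homotopy (k : Fin n) (γ : Bool) (c : Chain n) :
    bd (Dfun k γ c) + Dfun k γ (bd c) = c - phiC k γ c := by
  apply chain_ext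
  intro ρ
  rw [Finsupp.add_apply, Finsupp.sub_apply, bd_apply, Dfun_apply, phiC_apply]
  rcases hk : ρ k with _ | d₀
  · -- ρ k = none
    rw [if_pos rfl, if_neg (by simp [hk]), sub_zero, bd_apply, Finset.mul_sum,
      ← Finset.sum_add_distrib]
    rw [Finset.sum_eq_single k]
    · -- the i = k term gives c ρ
      have e2 : Function.update (Function.update ρ k (some (!γ))) k none = ρ := by
        rw [Function.update_idem, ← hk, Function.update_eq_self]
      have e3 : (Function.update ρ k (some (!γ))) k = some (!γ) := by simp
      have b0 : bco ρ k = 0 := by rw [bco, hk]; simp [sval]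
      have hbco2 : bco (Function.update ρ k (some (!γ))) k
          = (-1:ℤ) ^ (Cell.below ρ k) * sgn (!γ) := by
        rw [bco, e3, below_update]; rfl
      rw [b0, zero_mul, zero_add, hbco2, e2, sgn_not]
      have h1 := neg_one_pow_mul_self (Cell.below ρ k)
      have h2 := sgn_mul_self γ
      linear_combination (sgn γ * sgn γ * c ρ) * h1 + c ρ * h2
    · -- the i ≠ k terms cancel in pairs
      intro i _ hik
      have hik' : i ≠ k := hik
      rcases hi : ρ i with _ | δ
      · -- ρ i = none : both factors vanish
        have b1 : bco ρ i = 0 := by rw [bco, hi]; simp [sval]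
        have b2 : bco (Function.update ρ k (some (!γ))) i = 0 := by
          rw [bco, Function.update_of_ne hik']
          simp [hi, sval]
        rw [b1, b2, zero_mul, zero_mul, mul_zero, add_zero]
      · -- ρ i = some δ
        have hcond : Function.update ρ i none k = none := by
          rw [Function.update_of_ne (Ne.symm hik'), hk]
        rw [Dfun_apply, if_pos hcond]
        have harg : Function.update (Function.update ρ i none) k (some (!γ))
            = Function.update (Function.update ρ k (some (!γ))) i none :=
          Function.update_comm hik' _ _ _
        have hb1 : Cell.below (Function.update ρ i none) k
            = Cell.below ρ k + (if i < k then 1 else 0) :=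
          below_update_none_of_some hik' hi
        have hb2 : Cell.below (Function.update ρ k (some (!γ))) i + (if k < i then 1 else 0)
            = Cell.below ρ i :=
          below_update_some_of_none (Ne.symm hik') _ hk
        have hbco1 : bco ρ i = (-1:ℤ) ^ (Cell.below ρ i) * sgn δ := by rw [bco, hi]; rfl
        have hbco2 : bco (Function.update ρ k (some (!γ))) i
            = (-1:ℤ) ^ (Cell.below (Function.update ρ k (some (!γ))) i) * sgn δ := by
          rw [bco, Function.update_of_ne hik', hi]; rfl
        rw [hbco1, hbco2, harg, hb1]
        set m := Cell.below (Function.update ρ k (some (!γ))) i with hm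
        rcases lt_or_gt_of_ne hik' with hlt | hgt
        · rw [if_pos hlt] at *
          rw [if_neg (by omega : ¬ k < i)] at hb2
          have hmek : m = Cell.below ρ i := by omega
          rw [← hmek]
          rw [pow_succ]
          ring
        · rw [if_neg (by omega : ¬ i < k)] at *
          rw [if_pos hgt] at hb2
          have : Cell.below ρ i = m + 1 := by omega
          rw [this, add_zero, pow_succ]
          ring
    · intro h; exact absurd (Finset.mem_univ _) h
  · -- ρ k = some d₀
    rw [if_neg (by simp), add_zero]
    rw [Finset.sum_eq_single k]
    · have hcond : Function.update ρ k none k = none := by simp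
      rw [Dfun_apply, if_pos hcond, Function.update_idem, below_update]
      have hbco : bco ρ k = (-1:ℤ) ^ (Cell.below ρ k) * sgn d₀ := by rw [bco, hk]; rfl
      rw [hbco]
      by_cases hd : d₀ = γ
      · subst hd
        rw [if_pos rfl]
        have h1 := neg_one_pow_mul_self (Cell.below ρ k)
        have h2 := sgn_mul_self d₀
        linear_combination (-(sgn d₀ * sgn d₀ * c (Function.update ρ k (some (!d₀))))) * h1
          - c (Function.update ρ k (some (!d₀))) * h2
      · have hd' : d₀ = !γ := by cases γ <;> cases d₀ <;> simp_all
        subst hd'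
        rw [if_neg (by simp [hd])]
        have e1 : Function.update ρ k (some (!γ)) = ρ := by rw [← hk, Function.update_eq_self]
        rw [e1, sub_zero, sgn_not]
        have h1 := neg_one_pow_mul_self (Cell.below ρ k)
        have h2 := sgn_mul_self γ
        linear_combination (sgn γ * sgn γ * c ρ) * h1 + c ρ * h2
    · intro i _ hik
      have hcond : Function.update ρ i none k = some d₀ := by
        rw [Function.update_of_ne (Ne.symm hik), hk]
      rw [Dfun_apply, if_neg (by rw [hcond]; simp), mul_zero]
    · intro h; exact absurd (Finset.mem_univ _) h

lemma phiC_bd (k : Fin n) (γ : Bool) (c : Chain n) :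
    phiC k γ (bd c) = bd (phiC k γ c) := by
  apply chain_ext
  intro ρ
  rw [phiC_apply, bd_apply (phiC k γ c) ρ]
  rcases hk : ρ k with _ | d₀
  · rw [if_neg (by simp)]
    symm
    apply Finset.sum_eq_zero
    intro i _
    by_cases hik : i = k
    · subst hik
      rw [phiC_apply, if_neg (by simp)]
      ring
    · rw [phiC_apply, if_neg (by rw [Function.update_of_ne (Ne.symm hik), hk]; simp), mul_zero]
  · by_cases hd : d₀ = γ
    · subst hd
      rw [if_pos rfl, bd_apply, bd_apply, ← Finset.sum_add_distrib]
      refine Finset.sum_congr rfl fun i _ => ?_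
      by_cases hik : i = k
      · subst hik
        rw [phiC_apply, if_neg (by simp), mul_zero]
        have e3 : (Function.update ρ i (some (!d₀))) i = some (!d₀) := by simp
        have hbco1 : bco ρ i = (-1:ℤ) ^ (Cell.below ρ i) * sgn d₀ := by rw [bco, hk]; rfl
        have hbco2 : bco (Function.update ρ i (some (!d₀))) i
            = (-1:ℤ) ^ (Cell.below ρ i) * sgn (!d₀) := by
          rw [bco, e3, below_update]; rfl
        rw [hbco1, hbco2, Function.update_idem, sgn_not]
        ring
      · rw [phiC_apply, if_pos (by rw [Function.update_of_ne (Ne.symm hik)]; exact hk)]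
        have hsame : ∀ j, ρ j = none ↔ (Function.update ρ k (some (!d₀))) j = none := by
          intro j
          by_cases hj : j = k
          · subst hj; rw [hk]; simp
          · rw [Function.update_of_ne hj]
        have hbco2 : bco (Function.update ρ k (some (!d₀))) i = bco ρ i := by
          rw [bco, bco, Function.update_of_ne hik, below_congr hsame i]
        have harg : Function.update (Function.update ρ k (some (!d₀))) i none
            = Function.update (Function.update ρ i none) k (some (!d₀)) :=
          Function.update_comm (Ne.symm hik) _ _ _
        rw [hbco2, harg]
        ring
    · rw [if_neg (by simp [hd])]
      symm
      apply Finset.sum_eq_zero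
      intro i _
      by_cases hik : i = k
      · subst hik
        rw [phiC_apply, if_neg (by simp), mul_zero]
      · rw [phiC_apply, if_neg (by
          rw [Function.update_of_ne (Ne.symm hik), hk]
          simp [hd]), mul_zero]

end Homotopy

section BoundaryX

open Finset

variable {n : ℕ}

lemma sgn_true : sgn true = 1 := rfl
lemma sgn_false : sgn false = -1 := rfl

def Sset {n : ℕ} (σ ρ : Cell n) : Finset (Fin n) :=
  Finset.univ.filter fun j => σ j = none ∧ ρ j ≠ none

def rlt {n : ℕ} (σ ρ : Cell n) (j : Fin n) : ℕ :=
  (Finset.univ.filter fun j' => j' < j ∧ σ j' = none ∧ ρ j' ≠ none).card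

noncomputable def sg {n : ℕ} (σ ρ : Cell n) (j : Fin n) : ℤ :=
  (-1) ^ (Cell.below σ j + 1 + rle σ ρ j) * sval (ρ j)

lemma mem_Sset {σ ρ : Cell n} {j : Fin n} :
    j ∈ Sset σ ρ ↔ (σ j = none ∧ ρ j ≠ none) := by
  unfold Sset; simp

lemma Le_none {ρ σ : Cell n} (h : Le ρ σ) {j : Fin n} (hj : ρ j = none) : σ j = none := by
  by_contra hs
  have h2 := h j hs
  rw [hj] at h2
  exact hs h2.symm

lemma bco_none {ρ : Cell n} {i : Fin n} (h : ρ i = none) : bco ρ i = 0 := by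
  rw [bco, h]; simp [sval]

lemma below_add_rlt {ρ σ : Cell n} (h : Le ρ σ) (i : Fin n) :
    Cell.below ρ i + rlt σ ρ i = Cell.below σ i := by
  unfold Cell.below rlt
  rw [← Finset.card_union_of_disjoint]
  · congr 1
    ext j
    simp only [Finset.mem_union, Finset.mem_filter, Finset.mem_univ, true_and]
    constructor
    · rintro (⟨h1, h2⟩ | ⟨h1, h2, h3⟩)
      · exact ⟨h1, Le_none h h2⟩
      · exact ⟨h1, h2⟩
    · rintro ⟨h1, h2⟩
      by_cases h3 : ρ j = none
      · exact Or.inl ⟨h1, h3⟩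
      · exact Or.inr ⟨h1, h2, h3⟩
  · rw [Finset.disjoint_left]
    rintro j hj1 hj2
    simp only [Finset.mem_filter] at hj1 hj2
    exact hj2.2.2.2 hj1.2.2

lemma rle_eq_rlt {σ ρ : Cell n} {i : Fin n} (hσ : σ i = none) (hρ : ρ i ≠ none) :
    rle σ ρ i = rlt σ ρ i + 1 := by
  unfold rle rlt
  have hs : (univ.filter fun j' => j' ≤ i ∧ σ j' = none ∧ ρ j' ≠ none)
      = insert i (univ.filter fun j' => j' < i ∧ σ j' = none ∧ ρ j' ≠ none) := by
    ext j
    simp only [Finset.mem_insert, Finset.mem_filter, Finset.mem_univ, true_and]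
    constructor
    · rintro ⟨h1, h2, h3⟩
      rcases lt_or_eq_of_le h1 with h | h
      · exact Or.inr ⟨h, h2, h3⟩
      · exact Or.inl h
    · rintro (rfl | ⟨h1, h2, h3⟩)
      · exact ⟨le_refl _, hσ, hρ⟩
      · exact ⟨le_of_lt h1, h2, h3⟩
  rw [hs, Finset.card_insert_of_notMem (by simp)]

lemma rle_update_none {σ ρ : Cell n} {i : Fin n} (hρ : ρ i ≠ none) (j : Fin n) :
    rle σ (Function.update ρ i none) j + (if i ≤ j ∧ σ i = none then 1 else 0)
      = rle σ ρ j := by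
  unfold rle
  by_cases hc : i ≤ j ∧ σ i = none
  · rw [if_pos hc]
    have hmem : i ∈ univ.filter fun j' => j' ≤ j ∧ σ j' = none ∧ ρ j' ≠ none := by
      simp [hc.1, hc.2, hρ]
    have hs : (univ.filter fun j' => j' ≤ j ∧ σ j' = none ∧ Function.update ρ i none j' ≠ none)
        = (univ.filter fun j' => j' ≤ j ∧ σ j' = none ∧ ρ j' ≠ none).erase i := by
      ext j'
      by_cases hj' : j' = i
      · subst hj'; simp
      · simp [Function.update_of_ne hj', hj']
    rw [hs, Finset.card_erase_of_mem hmem]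
    have := Finset.card_pos.2 ⟨i, hmem⟩
    omega
  · rw [if_neg hc, add_zero]
    congr 1
    ext j'
    by_cases hj' : j' = i
    · subst hj'
      simp only [Finset.mem_filter, Finset.mem_univ, true_and, Function.update_self]
      constructor
      · rintro ⟨-, -, h3⟩; exact absurd rfl h3
      · rintro ⟨h1, h2, -⟩; exact absurd ⟨h1, h2⟩ hc
    · simp [Function.update_of_ne hj']

lemma dim_le_of_Le {ρ σ : Cell n} (h : Le ρ σ) : Cell.dim ρ ≤ Cell.dim σ := by
  apply Finset.card_le_card
  intro j hj
  simp only [Finset.mem_filter, Finset.mem_univ, true_and] at *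
  exact Le_none h hj

lemma card_Sset {ρ σ : Cell n} (h : Le ρ σ) :
    (Sset σ ρ).card + Cell.dim ρ = Cell.dim σ := by
  unfold Sset Cell.dim
  rw [← Finset.card_union_of_disjoint]
  · congr 1
    ext j
    simp only [Finset.mem_union, Finset.mem_filter, Finset.mem_univ, true_and]
    constructor
    · rintro (⟨h1, h2⟩ | h1)
      · exact h1
      · exact Le_none h h1
    · intro h1
      by_cases h2 : ρ j = none
      · exact Or.inr h2
      · exact Or.inl ⟨h1, h2⟩
  · rw [Finset.disjoint_left]
    rintro j hj1 hj2
    simp only [Finset.mem_filter] at hj1 hj2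
    exact hj1.2.2 hj2.2

lemma sg_eq_bco {σ ρ : Cell n} (h : Le ρ σ) {i : Fin n} (hi : i ∈ Sset σ ρ) :
    bco ρ i = sg σ ρ i := by
  obtain ⟨h1, h2⟩ := mem_Sset.1 hi
  have key : Cell.below ρ i + rle σ ρ i = Cell.below σ i + 1 := by
    have k1 := below_add_rlt h i
    have k2 := rle_eq_rlt h1 h2
    omega
  have hexp : Cell.below σ i + 1 + rle σ ρ i = Cell.below ρ i + 2 * rle σ ρ i := by omega
  rw [bco, sg, hexp, pow_add, pow_mul]
  norm_num

lemma sg_pm {σ ρ : Cell n} {i : Fin n} (hi : i ∈ Sset σ ρ) :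
    sg σ ρ i = 1 ∨ sg σ ρ i = -1 := by
  obtain ⟨-, h2⟩ := mem_Sset.1 hi
  rw [sg]
  rcases hv : ρ i with _ | d
  · exact absurd hv h2
  · rcases Nat.even_or_odd (Cell.below σ i + 1 + rle σ ρ i) with he | ho
    · rw [Even.neg_one_pow he]
      cases d <;> simp [sval, sgn]
    · rw [Odd.neg_one_pow ho]
      cases d <;> simp [sval, sgn]

lemma Emem_iff_sg {σ ρ : Cell n} {q : ℕ} (h1 : Le ρ σ) (h2 : Cell.dim ρ = q) (α : Bool) :
    Emem σ α q ρ ↔ ∀ j ∈ Sset σ ρ, sg σ ρ j = sgn α := by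
  constructor
  · rintro ⟨-, -, h3⟩ j hj
    obtain ⟨hσ, hρ⟩ := mem_Sset.1 hj
    rcases hv : ρ j with _ | d
    · exact absurd hv hρ
    · rw [sg, hv]
      exact h3 j d hσ hv
  · intro h
    refine ⟨h1, h2, fun j d hσ hρ => ?_⟩
    have hj : j ∈ Sset σ ρ := mem_Sset.2 ⟨hσ, by rw [hρ]; exact fun h => nomatch h⟩
    have := h j hj
    rw [sg, hρ] at this
    exact this

lemma Emem_update_iff {σ ρ : Cell n} {q : ℕ} {β : Bool} {i : Fin n}
    (h1 : Le ρ σ) (h2 : Cell.dim ρ = q) (hi : i ∈ Sset σ ρ) :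
    Emem σ β (q+1) (Function.update ρ i none) ↔
      ((∀ j ∈ Sset σ ρ, j < i → sg σ ρ j = sgn β) ∧
       (∀ j ∈ Sset σ ρ, i < j → sg σ ρ j = - sgn β)) := by
  obtain ⟨hσi, hρi⟩ := mem_Sset.1 hi
  obtain ⟨d₀, hd₀⟩ := Option.ne_none_iff_exists'.1 hρi
  have hLe : Le (Function.update ρ i none) σ := by
    intro j hj
    by_cases hij : j = i
    · subst hij; exact absurd hσi hj
    · rw [Function.update_of_ne hij]; exact h1 j hj
  have hdim : Cell.dim (Function.update ρ i none) = q + 1 := by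
    rw [dim_update_none hd₀, h2]
  have hrle : ∀ j : Fin n, j ≠ i →
      rle σ (Function.update ρ i none) j + (if i < j then 1 else 0) = rle σ ρ j := by
    intro j hj
    have := rle_update_none hρi (σ := σ) j
    rcases lt_or_gt_of_ne hj with hlt | hgt
    · rw [if_neg (not_lt.2 (le_of_lt hlt)), if_neg (by rintro ⟨h, -⟩; exact absurd hlt (not_lt.2 h))] at *
      omega
    · rw [if_pos hgt, if_pos ⟨le_of_lt hgt, hσi⟩] at *
      omega
  constructor
  · rintro ⟨-, -, h3⟩
    constructor
    · intro j hj hlt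
      obtain ⟨hσj, hρj⟩ := mem_Sset.1 hj
      obtain ⟨d, hd⟩ := Option.ne_none_iff_exists'.1 hρj
      have hji : j ≠ i := ne_of_lt hlt
      have hupd : Function.update ρ i none j = some d := by
        rw [Function.update_of_ne hji]; exact hd
      have hcond := h3 j d hσj hupd
      have hr := hrle j hji
      rw [if_neg (not_lt.2 (le_of_lt hlt))] at hr
      rw [sg, hd]
      rw [show Cell.below σ j + 1 + rle σ ρ j
          = Cell.below σ j + 1 + rle σ (Function.update ρ i none) j by omega]
      exact hcond
    · intro j hj hgt
      obtain ⟨hσj, hρj⟩ := mem_Sset.1 hj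
      obtain ⟨d, hd⟩ := Option.ne_none_iff_exists'.1 hρj
      have hji : j ≠ i := (ne_of_lt hgt).symm
      have hupd : Function.update ρ i none j = some d := by
        rw [Function.update_of_ne hji]; exact hd
      have hcond := h3 j d hσj hupd
      have hr := hrle j hji
      rw [if_pos hgt] at hr
      rw [sg, hd]
      rw [show Cell.below σ j + 1 + rle σ ρ j
          = (Cell.below σ j + 1 + rle σ (Function.update ρ i none) j) + 1 by omega]
      rw [pow_succ]
      rw [show (-1:ℤ) ^ (Cell.below σ j + 1 + rle σ (Function.update ρ i none) j) * -1 * sval (some d)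
          = -((-1:ℤ) ^ (Cell.below σ j + 1 + rle σ (Function.update ρ i none) j) * sval (some d)) by ring]
      exact congrArg Neg.neg hcond
  · rintro ⟨hA, hB⟩
    refine ⟨hLe, hdim, fun j d hσj hρj => ?_⟩
    have hji : j ≠ i := by
      intro e; subst e
      rw [Function.update_self] at hρj
      exact nomatch hρj
    have hd : ρ j = some d := by
      rw [Function.update_of_ne hji] at hρj; exact hρj
    have hjS : j ∈ Sset σ ρ := mem_Sset.2 ⟨hσj, by rw [hd]; exact fun h => nomatch h⟩
    have hr := hrle j hji
    rcases lt_or_gt_of_ne hji with hlt | hgt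
    · have hcond := hA j hjS hlt
      rw [sg, hd] at hcond
      rw [if_neg (not_lt.2 (le_of_lt hlt))] at hr
      rw [show Cell.below σ j + 1 + rle σ (Function.update ρ i none) j
          = Cell.below σ j + 1 + rle σ ρ j by omega]
      exact hcond
    · have hcond := hB j hjS hgt
      rw [sg, hd] at hcond
      rw [if_pos hgt] at hr
      rw [show Cell.below σ j + 1 + rle σ ρ j
          = (Cell.below σ j + 1 + rle σ (Function.update ρ i none) j) + 1 by omega] at hcond
      rw [pow_succ] at hcond
      have : -((-1:ℤ) ^ (Cell.below σ j + 1 + rle σ (Function.update ρ i none) j) * sval (some d)) = - sgn β := by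
        rw [← hcond]; ring
      have := neg_injective this
      exact this

lemma comb_sum : ∀ (m : ℕ) (S : Finset (Fin n)), S.card = m → ∀ (s : Fin n → ℤ) (b : ℤ),
    (b = 1 ∨ b = -1) → (∀ j ∈ S, s j = 1 ∨ s j = -1) → S.Nonempty →
    ∑ i ∈ S, (if (∀ j ∈ S, j < i → s j = b) ∧ (∀ j ∈ S, i < j → s j = -b) then s i else 0)
      = (if ∀ j ∈ S, s j = 1 then 1 else 0) - (if ∀ j ∈ S, s j = -1 then 1 else 0) := by
  intro m
  induction m with
  | zero =>
    intro S hcard s b hb hs hne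
    rw [Finset.card_eq_zero] at hcard
    subst hcard
    exact absurd hne (by simp)
  | succ m ih =>
    intro S hcard s b hb hs hne
    classical
    set a := S.min' hne with ha
    have hamem : a ∈ S := S.min'_mem hne
    have hS' : (S.erase a).card = m := by
      rw [Finset.card_erase_of_mem hamem, hcard]
      omega
    have hmin : ∀ j ∈ S, ¬ j < a := fun j hj => not_lt.2 (S.min'_le j hj)
    have herase_iff : ∀ j, j ∈ S.erase a ↔ (j ∈ S ∧ a < j) := by
      intro j
      rw [Finset.mem_erase]
      constructor
      · rintro ⟨hja, hjS⟩
        exact ⟨hjS, lt_of_le_of_ne (S.min'_le j hjS) (Ne.symm hja)⟩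
      · rintro ⟨hjS, hlt⟩
        exact ⟨ne_of_gt hlt, hjS⟩
    rw [← Finset.add_sum_erase _ _ hamem]
    have hterm_a : (if (∀ j ∈ S, j < a → s j = b) ∧ (∀ j ∈ S, a < j → s j = -b) then s a else 0)
        = (if (∀ j ∈ S.erase a, s j = -b) then s a else 0) := by
      apply if_congr _ rfl rfl
      constructor
      · rintro ⟨-, hc2⟩ j hj
        obtain ⟨hjS, hlt⟩ := (herase_iff j).1 hj
        exact hc2 j hjS hlt
      · intro hc
        refine ⟨fun j hj hlt => absurd hlt (hmin j hj), fun j hjS hlt => hc j ((herase_iff j).2 ⟨hjS, hlt⟩)⟩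
    have hterm_rest : ∑ i ∈ S.erase a, (if (∀ j ∈ S, j < i → s j = b) ∧ (∀ j ∈ S, i < j → s j = -b) then s i else 0)
        = (if s a = b then (∑ i ∈ S.erase a, (if (∀ j ∈ S.erase a, j < i → s j = b) ∧ (∀ j ∈ S.erase a, i < j → s j = -b) then s i else 0)) else 0) := by
      by_cases hsa : s a = b
      · rw [if_pos hsa]
        refine Finset.sum_congr rfl fun i hi => ?_
        obtain ⟨hiS, hai⟩ := (herase_iff i).1 hi
        apply if_congr _ rfl rfl
        constructor
        · rintro ⟨hc1, hc2⟩
          exact ⟨fun j hj hlt => hc1 j (Finset.mem_erase.1 hj).2 hlt,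
                 fun j hj hlt => hc2 j (Finset.mem_erase.1 hj).2 hlt⟩
        · rintro ⟨hc1, hc2⟩
          refine ⟨fun j hjS hlt => ?_, fun j hjS hlt => ?_⟩
          · by_cases hja : j = a
            · subst hja; exact hsa
            · exact hc1 j (Finset.mem_erase.2 ⟨hja, hjS⟩) hlt
          · have hja : j ≠ a := by
              intro e; subst e
              exact absurd (lt_trans hai hlt) (lt_irrefl _)
            exact hc2 j (Finset.mem_erase.2 ⟨hja, hjS⟩) hlt
      · rw [if_neg hsa]
        apply Finset.sum_eq_zero
        intro i hi
        obtain ⟨hiS, hai⟩ := (herase_iff i).1 hi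
        apply if_neg
        rintro ⟨hc1, -⟩
        exact hsa (hc1 a hamem hai)
    rw [hterm_a, hterm_rest]
    have hall : ∀ (x : ℤ), (∀ j ∈ S, s j = x) ↔ (s a = x ∧ ∀ j ∈ S.erase a, s j = x) := by
      intro x
      constructor
      · intro h
        exact ⟨h a hamem, fun j hj => h j (Finset.mem_erase.1 hj).2⟩
      · rintro ⟨hx1, hx2⟩ j hjS
        by_cases hja : j = a
        · subst hja; exact hx1
        · exact hx2 j (Finset.mem_erase.2 ⟨hja, hjS⟩)
    by_cases hSe : (S.erase a).Nonempty
    · have hrec := ih (S.erase a) hS' s b hb (fun j hj => hs j (Finset.mem_erase.1 hj).2) hSe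
      rw [hrec]
      rw [if_congr (hall 1) rfl rfl, if_congr (hall (-1)) rfl rfl]
      rcases hb with rfl | rfl <;> rcases hs a hamem with hsa | hsa <;>
        rw [hsa] <;> simp only [neg_neg] <;> split_ifs <;>
        first
          | omega
          | tauto
          | (exfalso
             obtain ⟨j0, hj0⟩ := hSe
             have e1 := ‹∀ j ∈ S.erase a, s j = 1› j0 hj0
             have e2 := ‹∀ j ∈ S.erase a, s j = -1› j0 hj0
             omega)
    · have he : S.erase a = ∅ := Finset.not_nonempty_iff_eq_empty.1 hSe
      rw [if_congr (hall 1) rfl rfl, if_congr (hall (-1)) rfl rfl, he]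
      simp only [Finset.sum_empty, Finset.notMem_empty, false_implies, implies_true, if_true,
        true_and, add_zero]
      rcases hs a hamem with hsa | hsa <;> rw [hsa] <;> split_ifs <;> first | omega | tauto

lemma bd_X {σ : Cell n} (β : Bool) {q : ℕ} (hq : q < Cell.dim σ) :
    bd (X σ β (q+1)) = X σ true q - X σ false q := by
  classical
  apply chain_ext
  intro ρ
  rw [bd_apply, Finsupp.sub_apply, X_apply, X_apply]
  by_cases hbase : Le ρ σ ∧ Cell.dim ρ = q
  case neg =>
    rw [if_neg (fun h => hbase ⟨h.1, h.2.1⟩), if_neg (fun h => hbase ⟨h.1, h.2.1⟩), sub_zero]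
    apply Finset.sum_eq_zero
    intro i _
    rcases hv : ρ i with _ | d
    · rw [bco_none hv, zero_mul]
    · rw [X_apply, if_neg, mul_zero]
      rintro ⟨hLe, hdim, -⟩
      apply hbase
      constructor
      · intro j hj
        by_cases hij : j = i
        · subst hij
          have h2 := hLe j hj
          rw [Function.update_self] at h2
          exact absurd h2.symm hj
        · rw [← Function.update_of_ne hij none ρ]
          exact hLe j hj
      · have := dim_update_none hv
        omega
  case pos =>
    obtain ⟨hLe, hdim⟩ := hbase
    have hScard : (Sset σ ρ).card + q = Cell.dim σ := by
      have := card_Sset (σ := σ) hLe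
      omega
    have hSne : (Sset σ ρ).Nonempty := Finset.card_pos.1 (by omega)
    rw [← Finset.sum_subset (Finset.subset_univ (Sset σ ρ))]
    · have hstep : ∀ i ∈ Sset σ ρ,
          bco ρ i * (X σ β (q+1)) (Function.update ρ i none)
          = (if (∀ j ∈ Sset σ ρ, j < i → sg σ ρ j = sgn β) ∧
               (∀ j ∈ Sset σ ρ, i < j → sg σ ρ j = - sgn β) then sg σ ρ i else 0) := by
        intro i hi
        rw [X_apply, sg_eq_bco hLe hi, mul_ite, mul_one, mul_zero]
        apply if_congr (Emem_update_iff hLe hdim hi) rfl rfl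
      rw [Finset.sum_congr rfl hstep]
      rw [comb_sum (Sset σ ρ).card (Sset σ ρ) rfl (sg σ ρ) (sgn β)
        (by cases β <;> simp [sgn]) (fun j hj => sg_pm hj) hSne]
      rw [if_congr (Emem_iff_sg hLe hdim true) rfl rfl,
          if_congr (Emem_iff_sg hLe hdim false) rfl rfl, sgn_true, sgn_false]
    · intro i _ hiS
      rcases hv : ρ i with _ | d
      · rw [bco_none hv, zero_mul]
      · rw [X_apply, if_neg, mul_zero]
        rintro ⟨hLe', -, -⟩
        apply hiS
        apply mem_Sset.2
        refine ⟨?_, by rw [hv]; exact fun h => nomatch h⟩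
        by_contra hσi
        have h2 := hLe' i hσi
        rw [Function.update_self] at h2
        exact hσi h2.symm

end BoundaryX

section XStruct

open Finset

variable {n : ℕ}

lemma X_zero {σ : Cell n} {α : Bool} {q : ℕ} (h : Cell.dim σ < q) : X σ α q = 0 := by
  apply chain_ext
  intro ρ
  rw [X_apply]
  rw [if_neg, Finsupp.coe_zero, Pi.zero_apply]
  rintro ⟨hLe, hdim, -⟩
  have := dim_le_of_Le hLe
  omega

lemma Le_refl (σ : Cell n) : Le σ σ := fun _ _ => rfl

lemma Emem_top_iff {σ : Cell n} {α : Bool} {ρ : Cell n} :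
    Emem σ α (Cell.dim σ) ρ ↔ ρ = σ := by
  constructor
  · rintro ⟨hLe, hdim, -⟩
    have hcard := card_Sset (σ := σ) hLe
    have hS : Sset σ ρ = ∅ := Finset.card_eq_zero.1 (by omega)
    funext j
    by_cases hj : σ j = none
    · by_cases hρ : ρ j = none
      · rw [hρ, hj]
      · exfalso
        have : j ∈ Sset σ ρ := mem_Sset.2 ⟨hj, hρ⟩
        rw [hS] at this
        exact absurd this (Finset.notMem_empty j)
    · exact hLe j hj
  · rintro rfl
    refine ⟨Le_refl ρ, rfl, fun j d hσ hρ => ?_⟩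
    rw [hσ] at hρ
    exact nomatch hρ

lemma X_top (σ : Cell n) (α : Bool) : X σ α (Cell.dim σ) = Finsupp.single σ 1 := by
  apply chain_ext
  intro ρ
  rw [X_apply, Finsupp.single_apply]
  by_cases h : ρ = σ
  · rw [if_pos (Emem_top_iff.2 h), if_pos h.symm]
  · rw [if_neg (fun e => h (Emem_top_iff.1 e)), if_neg (fun e => h e.symm)]

lemma Emem_not_both {σ : Cell n} {q : ℕ} (hq : q < Cell.dim σ) (ρ : Cell n) :
    ¬ (Emem σ true q ρ ∧ Emem σ false q ρ) := by
  rintro ⟨h1, h2⟩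
  have hLe := h1.1
  have hdim := h1.2.1
  have hcard := card_Sset (σ := σ) hLe
  have hSne : (Sset σ ρ).Nonempty := Finset.card_pos.1 (by omega)
  obtain ⟨j, hj⟩ := hSne
  have e1 := (Emem_iff_sg hLe hdim true).1 h1 j hj
  have e2 := (Emem_iff_sg hLe hdim false).1 h2 j hj
  rw [e1] at e2
  rw [sgn_true, sgn_false] at e2
  norm_num at e2

lemma posPart_apply (c : Chain n) (ρ : Cell n) : posPart c ρ = max (c ρ) 0 := by
  rw [posPart, Finsupp.mapRange_apply]

lemma negPart_apply (c : Chain n) (ρ : Cell n) : negPart c ρ = max (-(c ρ)) 0 := by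
  rw [negPart, Finsupp.mapRange_apply]

lemma bdp_X {σ : Cell n} (α β : Bool) {q : ℕ} (hq : q < Cell.dim σ) :
    bdp α (X σ β (q+1)) = X σ α q := by
  rw [bdp, bd_X β hq]
  have key : ∀ (ρ : Cell n),
      (X σ true q - X σ false q) ρ = (X σ true q) ρ - (X σ false q) ρ := fun ρ =>
    Finsupp.sub_apply _ _ _
  cases α
  · rw [if_neg (by simp)]
    apply chain_ext
    intro ρ
    rw [negPart_apply, key, X_apply, X_apply]
    by_cases h2 : Emem σ false q ρ
    · rw [if_pos h2, if_neg (fun h1 => Emem_not_both hq ρ ⟨h1, h2⟩)]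
      decide
    · rw [if_neg h2]
      by_cases h1 : Emem σ true q ρ
      · rw [if_pos h1]; decide
      · rw [if_neg h1]; decide
  · rw [if_pos rfl]
    apply chain_ext
    intro ρ
    rw [posPart_apply, key, X_apply, X_apply]
    by_cases h1 : Emem σ true q ρ
    · rw [if_pos h1, if_neg (fun h2 => Emem_not_both hq ρ ⟨h1, h2⟩)]
      decide
    · rw [if_neg h1]
      by_cases h2 : Emem σ false q ρ
      · rw [if_pos h2]; decide
      · rw [if_neg h2]; decide

lemma atom_eq_X (σ : Cell n) (α : Bool) (q : ℕ) : atom σ α q = X σ α q := by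
  rw [atom]
  by_cases hq : q ≤ Cell.dim σ
  · rw [if_pos hq]
    obtain ⟨m, hm⟩ : ∃ m, q + m = Cell.dim σ := ⟨Cell.dim σ - q, by omega⟩
    clear hq
    induction m generalizing q with
    | zero =>
      have : Cell.dim σ - q = 0 := by omega
      rw [this, Function.iterate_zero_apply]
      have hq : q = Cell.dim σ := by omega
      rw [hq, X_top]
    | succ m ih =>
      have h1 : Cell.dim σ - q = (Cell.dim σ - (q+1)) + 1 := by omega
      rw [h1, Function.iterate_succ_apply', ih (q+1) (by omega)]
      exact bdp_X α α (by omega)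
  · rw [if_neg hq, X_zero (by omega)]

lemma X_nonneg (σ : Cell n) (α : Bool) (q : ℕ) : 0 ≤ X σ α q := by
  rw [Finsupp.le_def]
  intro ρ
  rw [X_apply, Finsupp.coe_zero, Pi.zero_apply]
  split
  · norm_num
  · exact le_refl 0

lemma X_dim_support {σ : Cell n} {α : Bool} {q : ℕ} {ρ : Cell n} (h : X σ α q ρ ≠ 0) :
    Cell.dim ρ = q := by
  rw [X_apply] at h
  by_cases he : Emem σ α q ρ
  · exact he.2.1
  · rw [if_neg he] at h; exact absurd rfl h

lemma bd_dim_support {c : Chain n} {m : ℕ} (hc : ∀ τ, c τ ≠ 0 → Cell.dim τ = m + 1)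
    {ρ : Cell n} (h : bd c ρ ≠ 0) : Cell.dim ρ = m := by
  rw [bd_apply] at h
  obtain ⟨i, -, hi⟩ := Finset.exists_ne_zero_of_sum_ne_zero h
  rcases hv : ρ i with _ | d
  · rw [bco_none hv, zero_mul] at hi
    exact absurd rfl hi
  · have hcn : c (Function.update ρ i none) ≠ 0 := by
      intro e
      rw [e, mul_zero] at hi
      exact hi rfl
    have := hc _ hcn
    have h2 := dim_update_none hv
    omega

lemma dim_un : Cell.dim (un n) = n := by
  unfold Cell.dim un
  rw [Finset.filter_true_of_mem (fun _ _ => rfl)]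
  simp

lemma below_un (j : Fin n) : Cell.below (un n) j = (j : ℕ) := by
  unfold Cell.below un
  rw [show (univ.filter fun j' : Fin n => j' < j ∧ (none : Option Bool) = none) = Finset.Iio j by
    ext j'; simp]
  exact Fin.card_Iio j

lemma dim_kcell (k : Fin n) (γ : Bool) : Cell.dim (kcell k γ) + 1 = n := by
  rw [kcell, dim_update_some γ rfl]
  exact dim_un

lemma Le_un (ρ : Cell n) : Le ρ (un n) := by
  intro j hj
  exact absurd rfl hj

lemma dim_zero_iff {ρ : Cell n} : Cell.dim ρ = 0 ↔ ∀ j, ρ j ≠ none := by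
  unfold Cell.dim
  rw [Finset.card_eq_zero, Finset.filter_eq_empty_iff]
  simp

end XStruct

section KSpecific

open Finset

variable {n : ℕ}

lemma kcell_apply_self (k : Fin n) (γ : Bool) : kcell k γ k = some γ :=
  Function.update_self _ _ _

lemma kcell_apply_ne (k : Fin n) (γ : Bool) {j : Fin n} (h : j ≠ k) : kcell k γ j = none :=
  Function.update_of_ne h _ _

lemma rle_congr {σ ρ ρ' : Cell n} (h : ∀ j, ρ j = none ↔ ρ' j = none) (j : Fin n) :
    rle σ ρ j = rle σ ρ' j := by
  unfold rle
  congr 1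
  apply Finset.filter_congr
  intro j' _
  constructor
  · rintro ⟨h1, h2, h3⟩
    exact ⟨h1, h2, fun e => h3 ((h j').2 e)⟩
  · rintro ⟨h1, h2, h3⟩
    exact ⟨h1, h2, fun e => h3 ((h j').1 e)⟩

lemma dim_congr {ρ ρ' : Cell n} (h : ∀ j, ρ j = none ↔ ρ' j = none) :
    Cell.dim ρ = Cell.dim ρ' := by
  unfold Cell.dim
  congr 1
  apply Finset.filter_congr
  intro j _
  rw [h j]

lemma below_kcell (k : Fin n) (γ : Bool) (j : Fin n) :
    Cell.below (kcell k γ) j + (if k < j then 1 else 0) = (j : ℕ) := by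
  by_cases hj : j = k
  · subst hj
    unfold kcell
    rw [below_update, below_un, if_neg (lt_irrefl j), add_zero]
  · have h2 := below_update_some_of_none (ρ := un n) (i := k) (j := j) (fun e => hj e.symm) γ rfl
    rw [below_un] at h2
    exact h2

lemma rle_kcell (k : Fin n) (γ : Bool) {ρ : Cell n} (hρk : ρ k ≠ none) (j : Fin n) :
    rle (kcell k γ) ρ j + (if k ≤ j then 1 else 0) = rle (un n) ρ j := by
  unfold rle
  by_cases hc : k ≤ j
  · rw [if_pos hc]
    have hmem : k ∈ univ.filter (fun j' => j' ≤ j ∧ un n j' = none ∧ ρ j' ≠ none) := by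
      simp only [Finset.mem_filter, Finset.mem_univ, true_and]
      exact ⟨hc, rfl, hρk⟩
    have hs : (univ.filter fun j' => j' ≤ j ∧ kcell k γ j' = none ∧ ρ j' ≠ none)
        = (univ.filter fun j' => j' ≤ j ∧ un n j' = none ∧ ρ j' ≠ none).erase k := by
      ext j'
      by_cases hj' : j' = k
      · subst hj'
        simp [kcell_apply_self]
      · simp [kcell_apply_ne k γ hj', un, hj']
    rw [hs, Finset.card_erase_of_mem hmem]
    have := Finset.card_pos.2 ⟨k, hmem⟩
    omega
  · rw [if_neg hc, add_zero]
    congr 1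
    ext j'
    by_cases hj' : j' = k
    · subst hj'
      simp only [Finset.mem_filter, Finset.mem_univ, true_and, kcell_apply_self]
      constructor
      · rintro ⟨-, h2, -⟩; exact absurd h2 (by simp)
      · rintro ⟨h1, -, -⟩; exact absurd h1 hc
    · simp [kcell_apply_ne k γ hj', un]

lemma rlt_update (σ ρ : Cell n) (k : Fin n) (v : Option Bool) :
    rlt σ (Function.update ρ k v) k = rlt σ ρ k := by
  unfold rlt
  congr 1
  apply Finset.filter_congr
  intro j' _
  by_cases h : j' < k
  · simp [Function.update_of_ne (ne_of_lt h), h]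
  · simp [h]

lemma negpow_congr {a b c : ℕ} (h : a = b + 2 * c) : (-1:ℤ)^a = (-1)^b := by
  rw [h, pow_add, pow_mul]
  norm_num

open Classical in
lemma Emem_kcell_split (k : Fin n) (γ : Bool) {ρ : Cell n} (hkγ : ρ k = some γ)
    (β : Bool) (q : ℕ) :
    (if Emem (un n) β q ρ then (1:ℤ) else 0)
      + (if Emem (un n) β q (Function.update ρ k (some (!γ))) then 1 else 0)
      = if Emem (kcell k γ) β q ρ then 1 else 0 := by
  classical
  set ρ' := Function.update ρ k (some (!γ)) with hρ'
  have hsame : ∀ j, ρ j = none ↔ ρ' j = none := by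
    intro j
    by_cases hj : j = k
    · subst hj
      rw [hkγ, hρ', Function.update_self]
      simp
    · rw [hρ', Function.update_of_ne hj]
  have hdim' : Cell.dim ρ = Cell.dim ρ' := dim_congr hsame
  have hρ'k : ρ' k = some (!γ) := Function.update_self _ _ _
  have hρ'ne : ∀ j, j ≠ k → ρ' j = ρ j := fun j hj => Function.update_of_ne hj _ _
  have hrle' : ∀ j, rle (un n) ρ j = rle (un n) ρ' j := rle_congr hsame
  -- parity agreement of the `un` and `kcell` sign conditions away from `k`
  have hpar : ∀ j : Fin n, j ≠ k →
      (-1:ℤ)^(Cell.below (un n) j + 1 + rle (un n) ρ j)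
        = (-1:ℤ)^(Cell.below (kcell k γ) j + 1 + rle (kcell k γ) ρ j) := by
    intro j hj
    apply negpow_congr (c := if k < j then 1 else 0)
    have e1 := below_kcell k γ j
    have e2 := rle_kcell k γ (ρ := ρ) (by rw [hkγ]; simp) j
    rw [below_un]
    rcases lt_trichotomy k j with h | h | h
    · rw [if_pos h] at e1 ⊢
      rw [if_pos (le_of_lt h)] at e2
      omega
    · exact absurd h.symm hj
    · rw [if_neg (not_lt.2 (le_of_lt h))] at e1 ⊢
      rw [if_neg (not_le.2 h)] at e2
      omega
  -- the sign condition of `ρ` at `k` in `E(un)`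
  set v : ℤ := (-1:ℤ)^(Cell.below (un n) k + 1 + rle (un n) ρ k) * sgn γ with hv
  have hvpm : v = 1 ∨ v = -1 := by
    rcases Nat.even_or_odd (Cell.below (un n) k + 1 + rle (un n) ρ k) with he | ho
    · rw [hv, Even.neg_one_pow he]; cases γ <;> simp [sgn]
    · rw [hv, Odd.neg_one_pow ho]; cases γ <;> simp [sgn]
  have hcondk' : (-1:ℤ)^(Cell.below (un n) k + 1 + rle (un n) ρ' k) * sgn (!γ) = -v := by
    rw [hv, ← hrle' k, sgn_not]
    ring
  -- equivalences
  have equn : Emem (un n) β q ρ ↔ (Emem (kcell k γ) β q ρ ∧ v = sgn β) := by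
    constructor
    · rintro ⟨-, hdim, hsg⟩
      refine ⟨⟨?_, hdim, ?_⟩, ?_⟩
      · intro j hj
        by_cases hjk : j = k
        · subst hjk; rw [hkγ, kcell_apply_self]
        · exact absurd (kcell_apply_ne k γ hjk) hj
      · intro j d hσj hρj
        have hjk : j ≠ k := by
          intro e; subst e
          rw [kcell_apply_self] at hσj
          exact nomatch hσj
        have := hsg j d rfl hρj
        rw [← hpar j hjk]
        exact this
      · have := hsg k γ rfl hkγ
        rw [hv]; exact this
    · rintro ⟨⟨-, hdim, hsg⟩, hvb⟩
      refine ⟨Le_un ρ, hdim, ?_⟩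
      intro j d hσj hρj
      by_cases hjk : j = k
      · subst hjk
        rw [hkγ] at hρj
        have : d = γ := by injection hρj with h; exact h.symm
        subst this
        rw [← hv]; exact hvb
      · rw [hpar j hjk]
        exact hsg j d (kcell_apply_ne k γ hjk) hρj
  have equn' : Emem (un n) β q ρ' ↔ (Emem (kcell k γ) β q ρ ∧ -v = sgn β) := by
    constructor
    · rintro ⟨-, hdim, hsg⟩
      refine ⟨⟨?_, by omega, ?_⟩, ?_⟩
      · intro j hj
        by_cases hjk : j = k
        · subst hjk; rw [hkγ, kcell_apply_self]
        · exact absurd (kcell_apply_ne k γ hjk) hj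
      · intro j d hσj hρj
        have hjk : j ≠ k := by
          intro e; subst e
          rw [kcell_apply_self] at hσj
          exact nomatch hσj
        have := hsg j d rfl ((hρ'ne j hjk).trans hρj)
        rw [← hpar j hjk, hrle' j]
        exact this
      · have := hsg k (!γ) rfl hρ'k
        rw [← hcondk']; exact this
    · rintro ⟨⟨-, hdim, hsg⟩, hvb⟩
      refine ⟨Le_un ρ', by omega, ?_⟩
      intro j d hσj hρj
      by_cases hjk : j = k
      · subst hjk
        rw [hρ'k] at hρj
        have : d = !γ := by injection hρj with h; exact h.symm
        subst this
        rw [hcondk']; exact hvb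
      · rw [← hrle' j, hpar j hjk]
        exact hsg j d (kcell_apply_ne k γ hjk) ((hρ'ne j hjk).symm.trans hρj)
  have hsgnpm : sgn β = 1 ∨ sgn β = -1 := by cases β <;> simp [sgn]
  by_cases hK : Emem (kcell k γ) β q ρ
  · rw [if_pos hK]
    by_cases hvb : v = sgn β
    · rw [if_pos (equn.2 ⟨hK, hvb⟩), if_neg]
      · norm_num
      · rw [equn']
        rintro ⟨-, hvb'⟩
        omega
    · rw [if_neg (fun h => hvb (equn.1 h).2), if_pos (equn'.2 ⟨hK, by omega⟩)]
      norm_num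
  · rw [if_neg hK, if_neg (fun h => hK (equn.1 h).1), if_neg (fun h => hK (equn'.1 h).1)]
    norm_num

lemma phiX (k : Fin n) (γ : Bool) (β : Bool) (q : ℕ) :
    phiC k γ (X (un n) β q) = X (kcell k γ) β q := by
  apply chain_ext
  intro ρ
  rw [phiC_apply, X_apply, X_apply, X_apply]
  by_cases hkγ : ρ k = some γ
  · rw [if_pos hkγ]
    exact Emem_kcell_split k γ hkγ β q
  · rw [if_neg hkγ, if_neg]
    rintro ⟨hLe, -, -⟩
    apply hkγ
    have := hLe k (by rw [kcell_apply_self]; simp)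
    rw [this, kcell_apply_self]

open Classical in
lemma DX_apply (k : Fin n) (γ : Bool) (β : Bool) (q : ℕ) (ρ : Cell n) :
    Dfun k γ (X (un n) β q) ρ =
      sgn β * (if (ρ k = none ∧ Emem (un n) β q (Function.update ρ k (some (!γ))))
        then (1:ℤ) else 0) := by
  rw [Dfun_apply]
  rcases hk : ρ k with _ | d
  · rw [if_pos rfl, X_apply]
    by_cases hE : Emem (un n) β q (Function.update ρ k (some (!γ)))
    · rw [if_pos hE, if_pos ⟨rfl, hE⟩, mul_one, mul_one]
      have hupdk : Function.update ρ k (some (!γ)) k = some (!γ) := Function.update_self _ _ _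
      have hsign := hE.2.2 k (!γ) rfl hupdk
      have hrle : rle (un n) (Function.update ρ k (some (!γ))) k = rlt (un n) ρ k + 1 := by
        rw [rle_eq_rlt rfl (by rw [hupdk]; simp), rlt_update]
      have hb : Cell.below ρ k + rlt (un n) ρ k = (k : ℕ) := by
        have := below_add_rlt (Le_un ρ) k
        rw [below_un] at this
        exact this
      have hexp : (-1:ℤ)^(Cell.below (un n) k + 1 + rle (un n) (Function.update ρ k (some (!γ))) k)
          = (-1:ℤ)^(Cell.below ρ k) := by
        apply negpow_congr (c := rlt (un n) ρ k + 1)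
        rw [below_un, hrle]
        omega
      rw [hexp, sgn_not] at hsign
      linear_combination hsign
    · rw [if_neg hE, if_neg (fun h => hE h.2), mul_zero, mul_zero]
  · rw [if_neg (by simp), if_neg (by rintro ⟨h, -⟩; exact nomatch h), mul_zero]

end KSpecific

section Assembly1

open Finset

variable {n : ℕ}

lemma aug_apply (c : Chain n) :
    aug c = ∑ σ' ∈ univ.filter (fun σ' : Cell n => Cell.dim σ' = 0), c σ' := by
  rw [aug, Finsupp.sum_fintype]
  · exact (Finset.sum_filter _ _).symm
  · intro τ
    exact ite_self 0

def vtx {n : ℕ} (σ : Cell n) (α : Bool) : Cell n :=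
  fun j => if σ j = none then some α else σ j

lemma sgn_inj {a b : Bool} (h : sgn a = sgn b) : a = b := by
  cases a <;> cases b <;> simp_all [sgn]

lemma rlt_eq_below_of_dim0 {σ ρ : Cell n} (h : ∀ j', ρ j' ≠ none) (j : Fin n) :
    rlt σ ρ j = Cell.below σ j := by
  unfold rlt Cell.below
  congr 1
  apply Finset.filter_congr
  intro j' _
  constructor
  · rintro ⟨h1, h2, -⟩; exact ⟨h1, h2⟩
  · rintro ⟨h1, h2⟩; exact ⟨h1, h2, h j'⟩

lemma dim_vtx (σ : Cell n) (α : Bool) : Cell.dim (vtx σ α) = 0 := by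
  rw [dim_zero_iff]
  intro j
  unfold vtx
  rcases hσ : σ j with _ | d <;> simp

lemma vtx_ne_none (σ : Cell n) (α : Bool) (j : Fin n) : vtx σ α j ≠ none := by
  have := dim_vtx σ α
  rw [dim_zero_iff] at this
  exact this j

lemma Emem_zero_iff {σ : Cell n} {α : Bool} {ρ : Cell n} :
    Emem σ α 0 ρ ↔ ρ = vtx σ α := by
  constructor
  · rintro ⟨hLe, hdim, hsg⟩
    have hnn : ∀ j', ρ j' ≠ none := dim_zero_iff.1 hdim
    funext j
    rcases hσ : σ j with _ | d
    · obtain ⟨d', hd'⟩ := Option.ne_none_iff_exists'.1 (hnn j)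
      have hcond := hsg j d' hσ hd'
      have hr : rle σ ρ j = Cell.below σ j + 1 := by
        rw [rle_eq_rlt hσ (hnn j), rlt_eq_below_of_dim0 hnn]
      rw [hr] at hcond
      have heven : (-1:ℤ) ^ (Cell.below σ j + 1 + (Cell.below σ j + 1)) = 1 :=
        Even.neg_one_pow ⟨Cell.below σ j + 1, by ring⟩
      rw [heven, one_mul] at hcond
      have : d' = α := sgn_inj hcond
      subst this
      rw [hd']
      unfold vtx
      rw [if_pos hσ]
    · rw [hLe j (by rw [hσ]; simp)]
      unfold vtx
      rw [if_neg (by rw [hσ]; simp), hσ]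
  · rintro rfl
    refine ⟨?_, dim_vtx σ α, ?_⟩
    · intro j hj
      unfold vtx
      rcases hσ : σ j with _ | d
      · exact absurd hσ hj
      · simp
    · intro j d hσ hρ
      have hd : d = α := by
        have : vtx σ α j = some α := by unfold vtx; rw [if_pos hσ]
        rw [this] at hρ
        injection hρ with h
        exact h.symm
      subst hd
      have hr : rle σ (vtx σ d) j = Cell.below σ j + 1 := by
        rw [rle_eq_rlt hσ (vtx_ne_none σ d j), rlt_eq_below_of_dim0 (vtx_ne_none σ d)]
      rw [hr]
      have heven : (-1:ℤ) ^ (Cell.below σ j + 1 + (Cell.below σ j + 1)) = 1 :=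
        Even.neg_one_pow ⟨Cell.below σ j + 1, by ring⟩
      rw [heven, one_mul]

lemma aug_X_zero (σ : Cell n) (α : Bool) : aug (X σ α 0) = 1 := by
  classical
  rw [aug_apply]
  have hstep : ∀ σ' ∈ univ.filter (fun σ' : Cell n => Cell.dim σ' = 0),
      X σ α 0 σ' = if σ' = vtx σ α then (1:ℤ) else 0 := by
    intro σ' _
    rw [X_apply]
    by_cases h : σ' = vtx σ α
    · rw [if_pos (Emem_zero_iff.2 h), if_pos h]
    · rw [if_neg (fun e => h (Emem_zero_iff.1 e)), if_neg h]
  rw [Finset.sum_congr rfl hstep, Finset.sum_ite_eq' _ (vtx σ α) (fun _ => (1:ℤ))]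
  rw [if_pos (by simp [dim_vtx])]

lemma bdX0 (σ : Cell n) (β : Bool) : bd (X σ β 0) = 0 := by
  apply chain_ext
  intro ρ
  rw [bd_apply, Finsupp.coe_zero, Pi.zero_apply]
  apply Finset.sum_eq_zero
  intro i _
  rcases hv : ρ i with _ | d
  · rw [bco_none hv, zero_mul]
  · rw [X_apply, if_neg, mul_zero]
    rintro ⟨-, hdim, -⟩
    have := dim_zero_iff.1 hdim i
    rw [Function.update_self] at this
    exact this rfl

lemma bd_X_un (α : Bool) {q : ℕ} (h : q < n) :
    bd (X (un n) α (q+1)) = X (un n) true q - X (un n) false q :=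
  bd_X α (by rw [dim_un]; exact h)

lemma bdbdX {σ : Cell n} {β : Bool} {q : ℕ} (h : q ≤ Cell.dim σ) :
    bd (bd (X σ β q)) = 0 := by
  match q with
  | 0 => rw [bdX0, bd_zero]
  | (m+1) =>
    rw [bd_X β (by omega), bd_sub]
    match m with
    | 0 => rw [bdX0, bdX0, sub_self]
    | (l+1) =>
      rw [bd_X true (by omega), bd_X false (by omega), sub_self]

lemma bdbdD (k : Fin n) (γ : Bool) {c : Chain n} (hc : bd (bd c) = 0) :
    bd (bd (Dfun k γ c)) = 0 := by
  have h1 := homotopy k γ c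
  have h2 := homotopy k γ (bd c)
  have e1 : bd (Dfun k γ c) = c - phiC k γ c - Dfun k γ (bd c) := eq_sub_of_add_eq h1
  rw [e1, bd_sub, bd_sub]
  have e2 : bd (Dfun k γ (bd c)) = bd c - phiC k γ (bd c) - Dfun k γ (bd (bd c)) :=
    eq_sub_of_add_eq h2
  rw [e2, hc, Dfun_zero, sub_zero, phiC_bd]
  abel

lemma KI (k : Fin n) (γ : Bool) (α : Bool) (q : ℕ) :
    X (un n) α q - bd (Dfun k γ (X (un n) α q))
      = X (kcell k γ) α q + Dfun k γ (bd (X (un n) α q)) := by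
  rw [← phiX k γ α q]
  have e1 : bd (Dfun k γ (X (un n) α q))
      = X (un n) α q - phiC k γ (X (un n) α q) - Dfun k γ (bd (X (un n) α q)) :=
    eq_sub_of_add_eq (homotopy k γ _)
  rw [e1]
  abel

lemma KI' (k : Fin n) (γ : Bool) (α : Bool) {q : ℕ} (hq : q < n) :
    X (un n) α (q+1) - bd (Dfun k γ (X (un n) α (q+1)))
      = X (kcell k γ) α (q+1) + Dfun k γ (X (un n) true q) - Dfun k γ (X (un n) false q) := by
  rw [KI, bd_X_un α hq, Dfun_sub]
  abel

lemma KI0 (k : Fin n) (γ : Bool) (α : Bool) :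
    X (un n) α 0 - bd (Dfun k γ (X (un n) α 0)) = X (kcell k γ) α 0 := by
  rw [KI, bdX0, Dfun_zero, add_zero]

open Classical in
lemma levelq_apply (k : Fin n) (γ : Bool) (α : Bool) {m : ℕ} (hm : m < n) (ρ : Cell n) :
    (X (un n) α (m+1) - bd (Dfun k γ (X (un n) α (m+1)))) ρ
      = (if Emem (kcell k γ) α (m+1) ρ then (1:ℤ) else 0)
        + (if ρ k = none ∧ Emem (un n) true m (Function.update ρ k (some (!γ))) then 1 else 0)
        + (if ρ k = none ∧ Emem (un n) false m (Function.update ρ k (some (!γ))) then 1 else 0) := by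
  rw [KI' k γ α hm, Finsupp.sub_apply, Finsupp.add_apply, DX_apply, DX_apply, X_apply,
    sgn_true, sgn_false]
  ring

end Assembly1

section Components

open Finset

variable {n : ℕ}

lemma comp_lt {p i : ℕ} (h : i < p) (x y : ℕ → Bool → Chain n) (β : Bool) :
    comp p x y i β = y i β := by
  rw [comp, dOp, if_pos h]
  abel

lemma comp_self (p : ℕ) (x y : ℕ → Bool → Chain n) (β : Bool) :
    comp p x y p β = x p β - x p true + y p β := by
  rw [comp, dOp, if_neg (lt_irrefl p), if_pos rfl]

lemma comp_gt {p i : ℕ} (h : p < i) (x y : ℕ → Bool → Chain n) (β : Bool) :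
    comp p x y i β = x i β + y i β := by
  rw [comp, dOp, if_neg (by omega), if_neg (by omega)]
  abel

lemma Aseq_eval1 (k : Fin n) (γ : Bool) {q i : ℕ} (h : i + 1 < q) (β α : Bool) :
    Aseq k γ q β i α = X (un n) α i := by
  rw [Aseq, if_pos h, atom_eq_X]

lemma Aseq_eval2a (k : Fin n) (γ : Bool) (q : ℕ) (β : Bool) :
    Aseq k γ (q+1) β q β = X (un n) β q := by
  rw [Aseq, if_neg (by omega), if_pos rfl, if_pos rfl, atom_eq_X]

lemma Aseq_eval2b (k : Fin n) (γ : Bool) (q : ℕ) {β α : Bool} (h : ¬ (α = β)) :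
    Aseq k γ (q+1) β q α = X (un n) β q - bd (Dfun k γ (X (un n) β q)) := by
  rw [Aseq, if_neg (by omega), if_pos rfl, if_neg h, atom_eq_X]

lemma Aseq_eval3 (k : Fin n) (γ : Bool) (q : ℕ) (β α : Bool) :
    Aseq k γ (q+1) β (q+1) α = sgn β • Dfun k γ (X (un n) β q) := by
  rw [Aseq, if_neg (by omega), if_neg (by omega), if_pos rfl, Nat.add_sub_cancel, atom_eq_X]

lemma Aseq_eval4 (k : Fin n) (γ : Bool) {q i : ℕ} (h : q < i) (β α : Bool) :
    Aseq k γ q β i α = 0 := by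
  rw [Aseq, if_neg (by omega), if_neg (by omega), if_neg (by omega)]

lemma Aq_comp (k : Fin n) (γ : Bool) :
    ∀ q : ℕ, q + 1 ≤ n →
      ((∀ (i : ℕ) (α : Bool), i < q → Aq k γ q i α = X (un n) α i) ∧
       (∀ α : Bool, Aq k γ q q α = X (un n) α q - bd (Dfun k γ (X (un n) α q))) ∧
       (∀ (i : ℕ) (α : Bool), q < i → Aq k γ q i α = X (kcell k γ) α i)) := by
  intro q
  induction q with
  | zero =>
    intro _
    refine ⟨fun i α h => absurd h (by omega), fun α => ?_, fun i α h => ?_⟩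
    · show atom (kcell k γ) α 0 = _
      rw [atom_eq_X, KI0]
    · show atom (kcell k γ) α i = _
      rw [atom_eq_X]
  | succ q ih =>
    intro hq
    obtain ⟨ih1, ih2, ih3⟩ := ih (by omega)
    have hqn : q < n := by omega
    refine ⟨?_, ?_, ?_⟩
    · intro i α hi
      show comp q (comp q (Aseq k γ (q+1) false) (Aq k γ q)) (Aseq k γ (q+1) true) i α = _
      rcases Nat.lt_or_ge i q with h | h
      · rw [comp_lt h, Aseq_eval1 k γ (by omega)]
      · have hiq : i = q := by omega
        subst hiq
        rw [comp_self]
        cases α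
        · rw [comp_self, comp_self, Aseq_eval2a k γ i, Aseq_eval2b k γ i (by simp),
            ih2 false, ih2 true, Aseq_eval2b k γ i (by simp)]
          abel
        · rw [comp_self, Aseq_eval2b k γ i (by simp), ih2 true, Aseq_eval2a k γ i]
          abel
    · intro α
      show comp q (comp q (Aseq k γ (q+1) false) (Aq k γ q)) (Aseq k γ (q+1) true) (q+1) α = _
      rw [comp_gt (by omega), comp_gt (by omega), Aseq_eval3, Aseq_eval3,
        ih3 (q+1) α (by omega), KI' k γ α hqn, sgn_true, sgn_false, one_smul, neg_one_smul]
      abel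
    · intro i α hi
      show comp q (comp q (Aseq k γ (q+1) false) (Aq k γ q)) (Aseq k γ (q+1) true) i α = _
      rw [comp_gt (by omega), comp_gt (by omega), Aseq_eval4 k γ (by omega),
        Aseq_eval4 k γ (by omega), ih3 i α (by omega)]
      abel

end Components

section Final

open Finset

variable {n : ℕ}

lemma Aq_isNu (k : Fin n) (γ : Bool) {q : ℕ} (hq : q + 1 ≤ n) : IsNu (Aq k γ q) := by
  obtain ⟨c1, c2, c3⟩ := Aq_comp k γ q hq
  refine ⟨?_, ?_, ?_, ?_⟩
  · -- dimensions
    intro i α σ' hσ'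
    rw [Finsupp.mem_support_iff] at hσ'
    rcases lt_trichotomy i q with h | h | h
    · rw [c1 i α h] at hσ'
      exact X_dim_support hσ'
    · subst h
      rw [c2 α] at hσ'
      rcases Nat.eq_zero_or_pos i with rfl | hpos
      · rw [KI0] at hσ'
        exact X_dim_support hσ'
      · obtain ⟨m, rfl⟩ : ∃ m, i = m + 1 := ⟨i - 1, by omega⟩
        rw [levelq_apply k γ α (show m < n by omega) σ'] at hσ'
        by_cases h1 : Emem (kcell k γ) α (m+1) σ'
        · exact h1.2.1
        · by_cases h2 : σ' k = none ∧ Emem (un n) true m (Function.update σ' k (some (!γ)))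
          · have hd := h2.2.2.1
            have := dim_update_some (!γ) h2.1
            omega
          · by_cases h3 : σ' k = none ∧ Emem (un n) false m (Function.update σ' k (some (!γ)))
            · have hd := h3.2.2.1
              have := dim_update_some (!γ) h3.1
              omega
            · rw [if_neg h1, if_neg h2, if_neg h3] at hσ'
              norm_num at hσ'
    · rw [c3 i α h] at hσ'
      exact X_dim_support hσ'
  · -- nonnegativity
    intro i α
    rcases lt_trichotomy i q with h | h | h
    · rw [c1 i α h]
      exact X_nonneg _ _ _
    · subst h
      rw [c2 α]
      rcases Nat.eq_zero_or_pos i with rfl | hpos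
      · rw [KI0]
        exact X_nonneg _ _ _
      · obtain ⟨m, rfl⟩ : ∃ m, i = m + 1 := ⟨i - 1, by omega⟩
        rw [Finsupp.le_def]
        intro ρ
        rw [Finsupp.coe_zero, Pi.zero_apply, levelq_apply k γ α (show m < n by omega) ρ]
        split_ifs <;> norm_num
    · rw [c3 i α h]
      exact X_nonneg _ _ _
  · -- augmentation
    intro α
    rcases Nat.eq_zero_or_pos q with rfl | hpos
    · rw [c2 α, KI0]
      exact aug_X_zero _ _
    · rw [c1 0 α (by omega)]
      exact aug_X_zero _ _
  · -- boundary relations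
    intro i α
    rcases lt_trichotomy i q with h | h | h
    · -- i < q
      rw [c1 i true (by omega), c1 i false (by omega)]
      rcases Nat.lt_or_ge (i+1) q with h2 | h2
      · rw [c1 (i+1) α h2]
        exact (bd_X_un α (by omega)).symm
      · have hq2 : q = i + 1 := by omega
        subst hq2
        rw [c2 α, bd_sub, bdbdD k γ (bdbdX (by rw [dim_un]; omega)), sub_zero,
          bd_X_un α (by omega)]
    · -- i = q
      subst h
      rw [c2 true, c2 false, c3 (i+1) α (by omega)]
      have hbdc := bd_X_un α (show i < n by omega)
      have h2 := eq_sub_of_add_eq (homotopy k γ (bd (X (un n) α (i+1))))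
      have hbb : bd (bd (X (un n) α (i+1))) = 0 := bdbdX (by rw [dim_un]; omega)
      rw [show (X (un n) true i - bd (Dfun k γ (X (un n) true i)))
            - (X (un n) false i - bd (Dfun k γ (X (un n) false i)))
          = (X (un n) true i - X (un n) false i)
            - (bd (Dfun k γ (X (un n) true i)) - bd (Dfun k γ (X (un n) false i))) from by abel]
      rw [← bd_sub, ← Dfun_sub, ← hbdc, h2, hbb, Dfun_zero, phiC_bd, phiX]
      abel
    · -- i > q
      rw [c3 i true (by omega), c3 i false (by omega), c3 (i+1) α (by omega)]
      rcases lt_trichotomy i (Cell.dim (kcell k γ)) with hd | hd | hd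
      · exact (bd_X α hd).symm
      · rw [hd, X_top, X_top, X_zero (by omega), bd_zero, sub_self]
      · rw [X_zero (by omega), X_zero (by omega), X_zero (by omega), bd_zero, sub_self]

end Final

/-- for `1 ≤ k ≤ n` (here `k : Fin n`, 0-indexed) and a sign `γ`, with
`σ = u_{k−1} ⊗ ∂^γ u₁ ⊗ u_{n−k}`, the elements `A_q ∈ ν Iⁿ` (`0 ≤ q ≤ n−1`) defined
inductively by `A_0 = ⟨σ⟩` and `A_q = A_q^− #_{q−1} A_{q−1} #_{q−1} A_q^+` exist
(in particular `d_{q−1}⁺ A_q^− = d_{q−1}⁻ A_{q−1}` and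
`d_{q−1}⁺ A_{q−1} = d_{q−1}⁻ A_q^+`, so the composites are defined) and satisfy
`(A_q)_i^α = ⟨u_n⟩_i^α` for `i < q`, `(A_q)_q^α = (id − ∂D)⟨u_n⟩_q^α`, and
`(A_q)_i^α = ⟨σ⟩_i^α` for `i > q`. -/
theorem Aq_mem_nu_and_components (n : ℕ) (k : Fin n) (γ : Bool) :
    (∀ q : ℕ, 1 ≤ q → q + 1 ≤ n →
      dOp (q - 1) true (Aseq k γ q false) = dOp (q - 1) false (Aq k γ (q - 1)) ∧
      dOp (q - 1) true (Aq k γ (q - 1)) = dOp (q - 1) false (Aseq k γ q true)) ∧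
    (∀ q : ℕ, q + 1 ≤ n →
      IsNu (Aq k γ q) ∧
      (∀ (i : ℕ) (α : Bool), i < q → Aq k γ q i α = atom (un n) α i) ∧
      (∀ α : Bool,
        Aq k γ q q α = atom (un n) α q - bd (Dfun k γ (atom (un n) α q))) ∧
      (∀ (i : ℕ) (α : Bool), q < i → Aq k γ q i α = atom (kcell k γ) α i)) := by
  constructor
  · intro q hq1 hqn
    obtain ⟨m, rfl⟩ : ∃ m, q = m + 1 := ⟨q - 1, by omega⟩
    obtain ⟨c1, c2, c3⟩ := Aq_comp k γ m (by omega)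
    rw [Nat.add_sub_cancel]
    constructor
    · funext i β
      simp only [dOp]
      rcases lt_trichotomy i m with h | h | h
      · rw [if_pos h, if_pos h, Aseq_eval1 k γ (by omega), c1 i β h]
      · rw [if_neg (show ¬ i < m by omega), if_pos h, if_neg (show ¬ i < m by omega), if_pos h]
        rw [Aseq_eval2b k γ m (by simp), c2 false]
      · rw [if_neg (show ¬ i < m by omega), if_neg (show ¬ i = m by omega),
          if_neg (show ¬ i < m by omega), if_neg (show ¬ i = m by omega)]
    · funext i β
      simp only [dOp]
      rcases lt_trichotomy i m with h | h | h
      · rw [if_pos h, if_pos h, c1 i β h, Aseq_eval1 k γ (by omega)]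
      · rw [if_neg (show ¬ i < m by omega), if_pos h, if_neg (show ¬ i < m by omega), if_pos h]
        rw [c2 true, Aseq_eval2b k γ m (by simp)]
      · rw [if_neg (show ¬ i < m by omega), if_neg (show ¬ i = m by omega),
          if_neg (show ¬ i < m by omega), if_neg (show ¬ i = m by omega)]
  · intro q hq
    obtain ⟨c1, c2, c3⟩ := Aq_comp k γ q hq
    refine ⟨Aq_isNu k γ hq, ?_, ?_, ?_⟩
    · intro i α h
      rw [c1 i α h, atom_eq_X]
    · intro α
      rw [c2 α, atom_eq_X]
    · intro i α h
      rw [c3 i α h, atom_eq_X]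

end CubicalNerve
end

section
/- Let ∂_k^γ be a face operation on n-cubes and let θ be a non-identity precubical operation complementary to ∂_k^γ. Then the standard decomposition of θ contains no factor ∂_{k−1}^γ, ∂_k^−, ∂_k^+, or ∂_{k+1}^γ. Consequently, in a stratified precubical set, any n-box b opposite ∂_k^γ such that θb is thin for every non-identity precubical operation θ whose standard decomposition contains none of ∂_{k−1}^γ, ∂_k^−, ∂_k^+, ∂_{k+1}^γ is admissible. -/
namespace CubicalNerve

/-- A stratified precubical set: a sequence of sets `X n` with face operations
`∂_i^α : X n → X (n-1)` (with `i : Fin n`, i.e. `i+1` in the paper's 1-indexing)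
satisfying the precubical relations, together with a class of thin `n`-cubes for
`n ≥ 1` (a `0`-cube is never thin). -/
structure SPS where
  X : ℕ → Type
  face : ∀ {n : ℕ}, Fin n → Bool → X n → X (n - 1)
  face_rel : ∀ {n : ℕ} (j : Fin n) (i : Fin (n - 1)) (h : (j : ℕ) ≤ (i : ℕ)) (α β : Bool)
      (x : X n),
    face i α (face j β x) =
      face ⟨(j : ℕ), lt_of_le_of_lt h i.isLt⟩ β
        (face ⟨(i : ℕ) + 1, by have := i.isLt; omega⟩ α x)
  thin : ∀ {n : ℕ}, X n → Prop
  thin_zero : ∀ x : X 0, ¬ thin x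

/-- The face operation `∂_i^α` with a 1-indexed natural number index (clamped into
range); the identity map in dimension `0`. -/
def SPS.faceN (P : SPS) (i : ℕ) (α : Bool) : ∀ {n : ℕ}, P.X n → P.X (n - 1)
  | 0, x => x
  | m + 1, x =>
      P.face (⟨min (i - 1) m, Nat.lt_succ_of_le (Nat.min_le_right _ _)⟩ : Fin (m + 1)) α x

/-- The action of a nonidentity precubical operation, written as a nonempty list
`(p :: L)` of 1-indexed (index, sign) pairs composed right-to-left (so the last
entry of the list is applied first), on a box or shell `b` (given as a family of
`m`-cubes indexed by all of `Fin (m+1) × Bool`): the last factor picks out an entry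
of `b`, and the remaining factors act by face operations. -/
def SPS.apBoxAux (P : SPS) {m : ℕ} (b : Fin (m + 1) → Bool → P.X m) :
    (ℕ × Bool) → (L : List (ℕ × Bool)) → P.X (m - L.length)
  | p, [] => b ⟨min (p.1 - 1) m, Nat.lt_succ_of_le (Nat.min_le_right _ _)⟩ p.2
  | p, q :: L => P.faceN p.1 p.2 (P.apBoxAux b q L)

/-- `L` is the standard decomposition of a precubical operation on `n`-cubes:
its 1-indexed indices are strictly increasing and lie in `{1, …, n}`. -/
def IsStdList (n : ℕ) (L : List (ℕ × Bool)) : Prop :=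
  L.Chain' (fun p q => p.1 < q.1) ∧ ∀ p ∈ L, 1 ≤ p.1 ∧ p.1 ≤ n

/-- Insertion of a factor into a standard decomposition, preserving the order. -/
def insSorted (a : ℕ × Bool) : List (ℕ × Bool) → List (ℕ × Bool)
  | [] => [a]
  | p :: L => if a.1 ≤ p.1 then a :: p :: L else p :: insSorted a L

/-- The standard decomposition `L` has constant sign: `(−1)^{i(r)−r} α(r)` is the same
for all `r`, where `∂_{i(r)}^{α(r)}` is the `r`-th factor (`r` 1-indexed). -/
def ConstSign (L : List (ℕ × Bool)) : Prop :=
  ∃ ε : ℤ, ∀ (t : ℕ) (h : t < L.length),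
    (-1 : ℤ) ^ ((L.get ⟨t, h⟩).1 + t + 1) * sgn (L.get ⟨t, h⟩).2 = ε

/-- The precubical operation with standard decomposition `L` (on `n`-cubes) is
complementary to the face operation `∂_k^γ` (`k` 1-indexed): `L` has no factor
`∂_k^±`, and inserting `∂_k^{−γ}` produces a standard decomposition with constant
sign. -/
def ComplOp (n k : ℕ) (γ : Bool) (L : List (ℕ × Bool)) : Prop :=
  IsStdList n L ∧ (∀ p ∈ L, p.1 ≠ k) ∧ ConstSign (insSorted (k, !γ) L)

/-- The face operation `∂_l^δ` is complementary to `∂_k^γ` (1-indexed). -/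
def FaceComplOp (n k : ℕ) (γ : Bool) (l : ℕ) (δ : Bool) : Prop := ComplOp n k γ [(l, δ)]

/-- `b` is an `(m+1)`-box opposite `∂_k^γ`, recorded as a total family of `m`-cubes
whose value at `(k, γ)` is irrelevant: the compatibility conditions
`∂_i^α b_j^β = ∂_j^β b_{i+1}^α` hold whenever neither index involved is `(k, γ)`. -/
def SPS.IsBox (P : SPS) {m : ℕ} (k : Fin (m + 1)) (γ : Bool)
    (b : Fin (m + 1) → Bool → P.X m) : Prop :=
  ∀ (j : Fin (m + 1)) (i : Fin m) (h : (j : ℕ) ≤ (i : ℕ)) (α β : Bool),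
    ((j, β) : Fin (m + 1) × Bool) ≠ (k, γ) →
    ((⟨(i : ℕ) + 1, by have := i.isLt; omega⟩, α) : Fin (m + 1) × Bool) ≠ (k, γ) →
    P.face i α (b j β) =
      P.face ⟨(j : ℕ), lt_of_le_of_lt h i.isLt⟩ β
        (b ⟨(i : ℕ) + 1, by have := i.isLt; omega⟩ α)

/-- `s` is an `(m+1)`-shell: a family of `m`-cubes indexed by all the face operations,
with `∂_i^α s_j^β = ∂_j^β s_{i+1}^α` for `i ≥ j`. -/
def SPS.IsShell (P : SPS) {m : ℕ} (s : Fin (m + 1) → Bool → P.X m) : Prop :=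
  ∀ (j : Fin (m + 1)) (i : Fin m) (h : (j : ℕ) ≤ (i : ℕ)) (α β : Bool),
    P.face i α (s j β) =
      P.face ⟨(j : ℕ), lt_of_le_of_lt h i.isLt⟩ β
        (s ⟨(i : ℕ) + 1, by have := i.isLt; omega⟩ α)

/-- The box `b` opposite `∂_k^γ` is admissible: `θ b` is thin for every non-identity
precubical operation `θ` complementary to `∂_k^γ`. -/
def SPS.AdmBox (P : SPS) {m : ℕ} (k : Fin (m + 1)) (γ : Bool)
    (b : Fin (m + 1) → Bool → P.X m) : Prop :=
  P.IsBox k γ b ∧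
  ∀ (p : ℕ × Bool) (L : List (ℕ × Bool)),
    ComplOp (m + 1) ((k : ℕ) + 1) γ (p :: L) → P.thin (P.apBoxAux b p L)

/-- The shell `s` is admissible: there are distinct, mutually non-complementary face
operations `∂_k^γ` and `∂_l^δ` with `s_k^γ = s_l^δ` such that the boxes obtained by
removing either are admissible. -/
def SPS.AdmShell (P : SPS) {m : ℕ} (s : Fin (m + 1) → Bool → P.X m) : Prop :=
  P.IsShell s ∧
  ∃ (k l : Fin (m + 1)) (γ δ : Bool),
    ((k, γ) : Fin (m + 1) × Bool) ≠ (l, δ) ∧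
    ¬ FaceComplOp (m + 1) ((k : ℕ) + 1) γ ((l : ℕ) + 1) δ ∧
    ¬ FaceComplOp (m + 1) ((l : ℕ) + 1) δ ((k : ℕ) + 1) γ ∧
    s k γ = s l δ ∧ P.AdmBox k γ s ∧ P.AdmBox l δ s

/-- `x` is a filler of the box `b` opposite `∂_k^γ`. -/
def SPS.FillsBox (P : SPS) {m : ℕ} (k : Fin (m + 1)) (γ : Bool)
    (b : Fin (m + 1) → Bool → P.X m) (x : P.X (m + 1)) : Prop :=
  ∀ (i : Fin (m + 1)) (α : Bool), ((i, α) : Fin (m + 1) × Bool) ≠ (k, γ) →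
    P.face i α x = b i α

/-- `x` is a filler of the shell `s`. -/
def SPS.FillsShell (P : SPS) {m : ℕ} (s : Fin (m + 1) → Bool → P.X m)
    (x : P.X (m + 1)) : Prop :=
  ∀ (i : Fin (m + 1)) (α : Bool), P.face i α x = s i α

/-- `P` is a *complete* stratified precubical set: every admissible box and every
admissible shell has a unique thin filler, and if `x` is the thin filler of an
admissible box `b` opposite `∂_k^γ` all of whose entries are thin, then the
additional face `∂_k^γ x` is thin as well. -/
def SPS.IsComplete (P : SPS) : Prop :=
  (∀ (m : ℕ) (k : Fin (m + 1)) (γ : Bool) (b : Fin (m + 1) → Bool → P.X m),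
     P.AdmBox k γ b → ∃! x : P.X (m + 1), P.thin x ∧ P.FillsBox k γ b x) ∧
  (∀ (m : ℕ) (s : Fin (m + 1) → Bool → P.X m),
     P.AdmShell s → ∃! x : P.X (m + 1), P.thin x ∧ P.FillsShell s x) ∧
  (∀ (m : ℕ) (k : Fin (m + 1)) (γ : Bool) (b : Fin (m + 1) → Bool → P.X m)
     (x : P.X (m + 1)),
     P.AdmBox k γ b → P.thin x → P.FillsBox k γ b x →
     (∀ (i : Fin (m + 1)) (α : Bool), ((i, α) : Fin (m + 1) × Bool) ≠ (k, γ) →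
        P.thin (b i α)) →
     P.thin (P.face k γ x))

/-- `E` is the system of degeneracy operations `ε` of a complete stratified precubical
set: `E n k x` (`x` an `n`-cube, `k : Fin (n+1)`, i.e. `ε_{k+1}` in 1-indexed notation)
is thin with faces `∂_i^α ε_k x = ε_{k-1} ∂_i^α x` for `i < k`, `∂_k^± ε_k x = x`,
and `∂_i^α ε_k x = ε_k ∂_{i-1}^α x` for `i > k`. -/
def SPS.IsDegSys (P : SPS) (E : ∀ n : ℕ, Fin (n + 1) → P.X n → P.X (n + 1)) : Prop :=
  (∀ (n : ℕ) (k : Fin (n + 1)) (x : P.X n), P.thin (E n k x)) ∧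
  (∀ (n : ℕ) (k : Fin (n + 1)) (α : Bool) (x : P.X n), P.face k α (E n k x) = x) ∧
  (∀ (n : ℕ) (k i : Fin (n + 2)) (α : Bool) (x : P.X (n + 1)) (h : (i : ℕ) < (k : ℕ)),
     P.face i α (E (n + 1) k x) =
       E n ⟨(k : ℕ) - 1, by have := k.isLt; omega⟩
         (P.face ⟨(i : ℕ), by have := k.isLt; omega⟩ α x)) ∧
  (∀ (n : ℕ) (k i : Fin (n + 2)) (α : Bool) (x : P.X (n + 1)) (h : (k : ℕ) < (i : ℕ)),
     P.face i α (E (n + 1) k x) =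
       E n ⟨(k : ℕ), by have := i.isLt; omega⟩
         (P.face ⟨(i : ℕ) - 1, by have := i.isLt; omega⟩ α x))

/-- `Γ` is the system of connection operations of a complete stratified precubical set
(`Γ n k γ x` for `x` an `(n+1)`-cube and `k : Fin (n+1)`, i.e. `Γ_{k+1}^γ`). -/
def SPS.IsConnSys (P : SPS) (E : ∀ n : ℕ, Fin (n + 1) → P.X n → P.X (n + 1))
    (Γ : ∀ n : ℕ, Fin (n + 1) → Bool → P.X (n + 1) → P.X (n + 2)) : Prop :=
  (∀ (n : ℕ) (k : Fin (n + 1)) (γ : Bool) (x : P.X (n + 1)), P.thin (Γ n k γ x)) ∧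
  (∀ (n : ℕ) (k : Fin (n + 1)) (γ : Bool) (x : P.X (n + 1)),
     P.face k.castSucc γ (Γ n k γ x) = x ∧ P.face k.succ γ (Γ n k γ x) = x) ∧
  (∀ (n : ℕ) (k : Fin (n + 1)) (γ : Bool) (x : P.X (n + 1)),
     P.face k.castSucc (!γ) (Γ n k γ x) = E n k (P.face k (!γ) x) ∧
     P.face k.succ (!γ) (Γ n k γ x) = E n k (P.face k (!γ) x)) ∧
  (∀ (n : ℕ) (k : Fin (n + 2)) (γ : Bool) (i : Fin (n + 3)) (α : Bool) (x : P.X (n + 2))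
     (h : (i : ℕ) < (k : ℕ)),
     P.face i α (Γ (n + 1) k γ x) =
       Γ n ⟨(k : ℕ) - 1, by have := k.isLt; omega⟩ γ
         (P.face ⟨(i : ℕ), by have := k.isLt; omega⟩ α x)) ∧
  (∀ (n : ℕ) (k : Fin (n + 2)) (γ : Bool) (i : Fin (n + 3)) (α : Bool) (x : P.X (n + 2))
     (h : (k : ℕ) + 1 < (i : ℕ)),
     P.face i α (Γ (n + 1) k γ x) =
       Γ n ⟨(k : ℕ), by have := i.isLt; omega⟩ γ
         (P.face ⟨(i : ℕ) - 1, by have := i.isLt; omega⟩ α x))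

/-- `G` is the system of composers of a complete stratified precubical set:
whenever `∂_k^+ x = ∂_k^- y`, the `(n+2)`-cube `G n k x y` is thin and has the faces
prescribed in the definition of the composer `G_k(x, y)` (all of them except the one
opposite `∂_k^-`). -/
def SPS.IsCompSys (P : SPS) (E : ∀ n : ℕ, Fin (n + 1) → P.X n → P.X (n + 1))
    (G : ∀ n : ℕ, Fin (n + 1) → P.X (n + 1) → P.X (n + 1) → P.X (n + 2)) : Prop :=
  (∀ (n : ℕ) (k : Fin (n + 1)) (x y : P.X (n + 1)),
     P.face k true x = P.face k false y → P.thin (G n k x y)) ∧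
  (∀ (n : ℕ) (k : Fin (n + 1)) (x y : P.X (n + 1)),
     P.face k true x = P.face k false y →
       P.face k.castSucc true (G n k x y) = y ∧
       P.face k.succ false (G n k x y) = x ∧
       P.face k.succ true (G n k x y) = E n k (P.face k true y)) ∧
  (∀ (n : ℕ) (k : Fin (n + 2)) (i : Fin (n + 3)) (α : Bool) (x y : P.X (n + 2)),
     P.face k true x = P.face k false y → ∀ h : (i : ℕ) < (k : ℕ),
     P.face i α (G (n + 1) k x y) =
       G n ⟨(k : ℕ) - 1, by have := k.isLt; omega⟩
         (P.face ⟨(i : ℕ), by have := k.isLt; omega⟩ α x)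
         (P.face ⟨(i : ℕ), by have := k.isLt; omega⟩ α y)) ∧
  (∀ (n : ℕ) (k : Fin (n + 2)) (i : Fin (n + 3)) (α : Bool) (x y : P.X (n + 2)),
     P.face k true x = P.face k false y → ∀ h : (k : ℕ) + 1 < (i : ℕ),
     P.face i α (G (n + 1) k x y) =
       G n ⟨(k : ℕ), by have := i.isLt; omega⟩
         (P.face ⟨(i : ℕ) - 1, by have := i.isLt; omega⟩ α x)
         (P.face ⟨(i : ℕ) - 1, by have := i.isLt; omega⟩ α y))

/-- The composite `x ∘_k y = ∂_k^- G_k(x, y)`. -/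
def SPS.cmp (P : SPS) (G : ∀ n : ℕ, Fin (n + 1) → P.X (n + 1) → P.X (n + 1) → P.X (n + 2))
    {n : ℕ} (k : Fin (n + 1)) (x y : P.X (n + 1)) : P.X (n + 1) :=
  P.face k.castSucc false (G n k x y)


lemma mem_insSorted_self (a : ℕ × Bool) (L : List (ℕ × Bool)) : a ∈ insSorted a L := by
  induction L with
  | nil => simp [insSorted]
  | cons p L ih =>
    rw [insSorted]
    split
    · exact List.mem_cons_self
    · exact List.mem_cons_of_mem _ ih

lemma mem_insSorted_of_mem {p : ℕ × Bool} (a : ℕ × Bool) {L : List (ℕ × Bool)}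
    (h : p ∈ L) : p ∈ insSorted a L := by
  induction L with
  | nil => simp at h
  | cons q L ih =>
    rw [insSorted]
    split
    · exact List.mem_cons_of_mem _ h
    · rcases List.mem_cons.1 h with h | h
      · exact h ▸ List.mem_cons_self
      · exact List.mem_cons_of_mem _ (ih h)

lemma chain'_insSorted (a : ℕ × Bool) :
    ∀ (L : List (ℕ × Bool)), L.Chain' (fun p q => p.1 < q.1) →
    (∀ p ∈ L, p.1 ≠ a.1) →
    (insSorted a L).Chain' (fun p q => p.1 < q.1)
  | [], _, _ => List.isChain_singleton a
  | p :: L, hL, hne => by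
    rw [insSorted]
    split
    · next h =>
      have hlt : a.1 < p.1 :=
        lt_of_le_of_ne h (fun e => hne p (List.mem_cons_self) e.symm)
      exact List.isChain_cons_cons.2 ⟨hlt, hL⟩
    · next h =>
      have hpa : p.1 < a.1 := by omega
      unfold List.Chain'
      rw [List.isChain_cons]
      refine ⟨?_, chain'_insSorted a L (List.IsChain.tail hL)
        (fun q hq => hne q (List.mem_cons_of_mem _ hq))⟩
      intro c hc
      cases L with
      | nil =>
        simp only [insSorted, List.head?_cons, Option.mem_def, Option.some.injEq] at hc
        exact hc ▸ hpa
      | cons q L =>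
        rw [insSorted] at hc
        split at hc
        · simp only [List.head?_cons, Option.mem_def, Option.some.injEq] at hc
          exact hc ▸ hpa
        · simp only [List.head?_cons, Option.mem_def, Option.some.injEq] at hc
          exact hc ▸ (List.isChain_cons_cons.1 hL).1

lemma constSign_adjacent {M : List (ℕ × Bool)}
    (hch : M.Chain' (fun p q => p.1 < q.1)) (hcs : ConstSign M)
    {a b : ℕ × Bool} (ha : a ∈ M) (hb : b ∈ M) (hab : b.1 = a.1 + 1) :
    a.2 = b.2 := by
  haveI : IsTrans (ℕ × Bool) (fun p q => p.1 < q.1) := ⟨fun _ _ _ h1 h2 => h1.trans h2⟩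
  have hpw : M.Pairwise (fun p q => p.1 < q.1) := List.isChain_iff_pairwise.1 hch
  have hmono := List.pairwise_iff_get.1 hpw
  obtain ⟨ta, hta⟩ := List.mem_iff_get.1 ha
  obtain ⟨tb, htb⟩ := List.mem_iff_get.1 hb
  have hlt : (ta : ℕ) < (tb : ℕ) := by
    rcases lt_trichotomy (ta : ℕ) (tb : ℕ) with h | h | h
    · exact h
    · exfalso
      have : a = b := by rw [← hta, ← htb]; congr 1; exact Fin.ext h
      rw [this] at hab
      omega
    · exfalso
      have := hmono tb ta h
      rw [hta, htb] at this
      omega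
  have htb' : (tb : ℕ) = (ta : ℕ) + 1 := by
    by_contra hne
    have hm : (ta : ℕ) + 1 < M.length := by omega
    have h1 := hmono ta ⟨(ta : ℕ) + 1, hm⟩ (by rw [Fin.lt_def]; exact Nat.lt_succ_self _)
    have h2 := hmono ⟨(ta : ℕ) + 1, hm⟩ tb (by
      rw [Fin.lt_def]; simp only [Fin.val_mk]; omega)
    rw [hta] at h1
    rw [htb] at h2
    omega
  obtain ⟨ε, hε⟩ := hcs
  have e1 := hε (ta : ℕ) ta.isLt
  have e2 := hε (tb : ℕ) tb.isLt
  rw [hta] at e1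
  rw [htb] at e2
  rw [hab, htb'] at e2
  have epow : ((-1 : ℤ)) ^ (a.1 + 1 + ((ta : ℕ) + 1) + 1) =
      (-1 : ℤ) ^ (a.1 + (ta : ℕ) + 1) := by
    have : a.1 + 1 + ((ta : ℕ) + 1) + 1 = (a.1 + (ta : ℕ) + 1) + 2 := by omega
    rw [this, pow_add]
    norm_num
  rw [epow] at e2
  have hsgn : sgn a.2 = sgn b.2 :=
    mul_left_cancel₀ (pow_ne_zero _ (by norm_num)) (e1.trans e2.symm)
  obtain ⟨a1, a2⟩ := a
  obtain ⟨b1, b2⟩ := b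
  cases a2 <;> cases b2 <;> simp [sgn] at hsgn ⊢

lemma complOp_avoids (n k : ℕ) (γ : Bool) (L : List (ℕ × Bool))
    (hk1 : 1 ≤ k) (hc : ComplOp n k γ L) :
    ∀ p ∈ L, p ≠ (k - 1, γ) ∧ p.1 ≠ k ∧ p ≠ (k + 1, γ) := by
  obtain ⟨⟨hch, hbd⟩, hnk, hcs⟩ := hc
  have hchM : (insSorted (k, !γ) L).Chain' (fun p q => p.1 < q.1) :=
    chain'_insSorted (k, !γ) L hch (fun p hp => hnk p hp)
  intro p hp
  refine ⟨?_, hnk p hp, ?_⟩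
  · intro hpe
    have h1 : 1 ≤ p.1 := (hbd p hp).1
    have hkk : k = p.1 + 1 := by
      have : p.1 = k - 1 := by rw [hpe]
      omega
    have := constSign_adjacent hchM hcs (mem_insSorted_of_mem _ hp)
      (mem_insSorted_self (k, !γ) L) hkk
    rw [hpe] at this
    simp at this
  · intro hpe
    have hkk : p.1 = (k, !γ).1 + 1 := by rw [hpe]
    have := constSign_adjacent hchM hcs (mem_insSorted_self (k, !γ) L)
      (mem_insSorted_of_mem _ hp) hkk
    rw [hpe] at this
    simp at this

/-- let `∂_k^γ` be a face operation on `n`-cubes (`k` 1-indexed) and let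
`θ` be a non-identity precubical operation complementary to `∂_k^γ`; then the standard
decomposition of `θ` contains no factor `∂_{k−1}^γ`, `∂_k^−`, `∂_k^+` or `∂_{k+1}^γ`.
Consequently, in a stratified precubical set, any box `b` opposite `∂_k^γ` such that
`θ b` is thin for every non-identity precubical operation `θ` whose standard
decomposition contains none of these factors is admissible. -/
theorem complementary_avoids_neighbours_and_admissibility :
    (∀ (n k : ℕ) (γ : Bool) (L : List (ℕ × Bool)), 1 ≤ k → k ≤ n → L ≠ [] →
      ComplOp n k γ L →
      ∀ p ∈ L, p ≠ (k - 1, γ) ∧ p.1 ≠ k ∧ p ≠ (k + 1, γ)) ∧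
    (∀ (P : SPS) (m : ℕ) (k : Fin (m + 1)) (γ : Bool) (b : Fin (m + 1) → Bool → P.X m),
      P.IsBox k γ b →
      (∀ (p : ℕ × Bool) (L : List (ℕ × Bool)), IsStdList (m + 1) (p :: L) →
        (∀ q ∈ p :: L,
          q ≠ (((k : ℕ) + 1) - 1, γ) ∧ q.1 ≠ (k : ℕ) + 1 ∧ q ≠ ((k : ℕ) + 1 + 1, γ)) →
        P.thin (P.apBoxAux b p L)) →
      P.AdmBox k γ b) := by
  constructor
  · intro n k γ L hk1 _ _ hc p hp
    exact complOp_avoids n k γ L hk1 hc p hp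
  · intro P m k γ b hbox hthin
    refine ⟨hbox, fun p L hc => ?_⟩
    exact hthin p L hc.1
      (fun q hq => complOp_avoids (m + 1) ((k : ℕ) + 1) γ (p :: L) (by omega) hc q hq)

end CubicalNerve
end
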